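/- arXiv:1112.2312 — 4 statements merged into one kernel-verified Lean document; each statement's English description precedes it below -/
import Mathlib

section
/- If P is a graded poset with finite principal ideals equipped with a rayless Morse matching M, then for every x ∈ P the digraph D_M(x) is acyclic and finite. -/
/-- A directed simple path of length `n` in the digraph with arrow relation `A`:
a sequence `p 0, …, p n` of pairwise distinct vertices with an arrow from each
vertex to the next. -/
def IsPathOn {V : Type*} (A : V → V → Prop) (n : ℕ) (p : ℕ → V) : Prop :=
  (∀ i j, i ≤ n → j ≤ n → p i = p j → i = j) ∧ ∀ i, i < n → A (p i) (p (i + 1))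

/-- A digraph is acyclic if no directed simple path can be closed up by an arrow
from its last vertex to its first. -/
def DAcyclic {V : Type*} (A : V → V → Prop) : Prop :=
  ¬ ∃ (n : ℕ) (p : ℕ → V), IsPathOn A n p ∧ A (p n) (p 0)

/-- A (directed) ray: pairwise distinct vertices `r 0, r 1, …` with an arrow from
`r i` to `r (i+1)` for every `i`. -/
def IsRay {V : Type*} (A : V → V → Prop) (r : ℕ → V) : Prop :=
  Function.Injective r ∧ ∀ i : ℕ, A (r i) (r (i + 1))

/-- A digraph is rayless if it contains no ray. -/
def Rayless {V : Type*} (A : V → V → Prop) : Prop := ¬ ∃ r : ℕ → V, IsRay A r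

/-- Two rays are equivalent if they coincide from some point on. -/
def RayEquiv {V : Type*} (r s : ℕ → V) : Prop :=
  ∃ M N : ℕ, ∀ i : ℕ, r (M + i) = s (N + i)

/-- The ray `r` has a bypass starting at `r n`: a directed simple path, not
contained in `r`, from `r n` to `r (n + k)` for some `k > 0`. -/
def HasBypassAt {V : Type*} (A : V → V → Prop) (r : ℕ → V) (n : ℕ) : Prop :=
  ∃ k : ℕ, 0 < k ∧ ∃ (m : ℕ) (p : ℕ → V), IsPathOn A m p ∧ p 0 = r n ∧
    p m = r (n + k) ∧ ∃ i ≤ m, ∀ j : ℕ, p i ≠ r j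

/-- A multiray: a ray having bypasses starting arbitrarily far along it. -/
def IsMultiray {V : Type*} (A : V → V → Prop) (r : ℕ → V) : Prop :=
  IsRay A r ∧ ∀ N : ℕ, ∃ i : ℕ, HasBypassAt A r (N + i)

/-- The family of equivalence classes of rays of the digraph `A`. -/
def RayClasses {V : Type*} (A : V → V → Prop) : Set (Set (ℕ → V)) :=
  {C | ∃ r : ℕ → V, IsRay A r ∧ C = {s | IsRay A s ∧ RayEquiv r s}}

section Poset

variable {P : Type*} [PartialOrder P]

/-- A chain contained in the principal ideal `x↓`. -/
def IsChainIn (x : P) (C : Set P) : Prop := C ⊆ Set.Iic x ∧ IsChain (· ≤ ·) C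

/-- A maximal chain in the principal ideal `x↓`. -/
def IsMaxChainIn (x : P) (C : Set P) : Prop :=
  IsChainIn x C ∧ ∀ D : Set P, IsChainIn x D → C ⊆ D → C = D

/-- `P` is graded with degree function `deg`: for every `x`, every maximal chain
in `x↓` is finite of length `deg x` (i.e. cardinality `deg x + 1`). -/
def GradedDeg (deg : P → ℕ) : Prop :=
  ∀ x : P, ∀ C : Set P, IsMaxChainIn x C → C.Finite ∧ C.ncard = deg x + 1

/-- A matching on the Hasse diagram of `P`: a set of arrows `(x, y)` (where `x`
covers `y`) no two of which share a vertex. -/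
def IsMatching (M : Set (P × P)) : Prop :=
  (∀ e ∈ M, e.2 ⋖ e.1) ∧
  ∀ e ∈ M, ∀ f ∈ M, e ≠ f → e.1 ≠ f.1 ∧ e.1 ≠ f.2 ∧ e.2 ≠ f.1 ∧ e.2 ≠ f.2

/-- The arrow relation of the digraph `H_M(P)`, obtained from the Hasse diagram
of `P` by reversing the arrows belonging to `M`. -/
def HasseM (M : Set (P × P)) (x y : P) : Prop :=
  (y ⋖ x ∧ (x, y) ∉ M) ∨ (y, x) ∈ M

/-- A Morse matching: a matching `M` on the Hasse diagram such that `H_M(P)` is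
acyclic. -/
def IsMorse (M : Set (P × P)) : Prop := IsMatching M ∧ DAcyclic (HasseM M)

/-- An element is critical for `M` if it is matched with no other element. -/
def Critical (M : Set (P × P)) (x : P) : Prop := ∀ e ∈ M, e.1 ≠ x ∧ e.2 ≠ x

/-- The set of critical elements of the matching `M`. -/
def Crit (M : Set (P × P)) : Set P := {x | Critical M x}

/-- The degree of a ray `r`: the minimal degree of an element appearing on `r`. -/
noncomputable def rayDeg (deg : P → ℕ) (r : ℕ → P) : ℕ := sInf {i | ∃ j : ℕ, deg (r j) = i}

/-- `M₊(x)`: if `x` is matched with an element `z` of degree `deg x + 1`, the set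
of elements `y ≠ x` covered by `z`; otherwise empty. -/
def Mplus (M : Set (P × P)) (deg : P → ℕ) (x : P) : Set P :=
  {y | ∃ z : P, (z, x) ∈ M ∧ deg z = deg x + 1 ∧ y ≠ x ∧ y ⋖ z}

/-- The stages `Dₖ(x)` of the construction of `D_M(x)`. -/
def Dk (M : Set (P × P)) (deg : P → ℕ) (x : P) : ℕ → Set P
  | 0 => {x}
  | (k + 1) => Dk M deg x k ∪ ⋃ y ∈ Dk M deg x k, Mplus M deg y

/-- The vertex set of the digraph `D_M(x)`. -/
def Dset (M : Set (P × P)) (deg : P → ℕ) (x : P) : Set P := ⋃ k : ℕ, Dk M deg x k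

/-- The arrow relation of the digraph `D_M(x)`: an arrow from `y` to each element
of `M₊(y)`. -/
def DArrow (M : Set (P × P)) (deg : P → ℕ) (x : P) (y z : P) : Prop :=
  y ∈ Dset M deg x ∧ z ∈ Mplus M deg y

/-- `L_M(x)`: the length of the longest directed simple path in `D_M(x)`. -/
noncomputable def LM (M : Set (P × P)) (deg : P → ℕ) (x : P) : ℕ :=
  sSup {n | ∃ p : ℕ → P, IsPathOn (DArrow M deg x) n p ∧ ∀ i ≤ n, p i ∈ Dset M deg x}

end Poset

section Aux

variable {P : Type*} [PartialOrder P]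

/-- In an acyclic digraph, any infinite walk is injective. -/
lemma walk_inj {V : Type*} {A : V → V → Prop} (hA : DAcyclic A) {s : ℕ → V}
    (hs : ∀ i, A (s i) (s (i + 1))) : Function.Injective s := by
  have key : ∀ d i : ℕ, 0 < d → s i ≠ s (i + d) := by
    intro d
    induction d using Nat.strong_induction_on with
    | _ d ih =>
      intro i hd heq
      by_cases hdist : ∀ a b, a ≤ d - 1 → b ≤ d - 1 → s (i + a) = s (i + b) → a = b
      · apply hA
        refine ⟨d - 1, fun t => s (i + t), ⟨hdist, fun t ht => ?_⟩, ?_⟩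
        · have h1 : i + t + 1 = i + (t + 1) := by omega
          have := hs (i + t); rwa [h1] at this
        · have h1 : A (s (i + (d - 1))) (s (i + (d - 1) + 1)) := hs _
          have h2 : i + (d - 1) + 1 = i + d := by omega
          rw [h2, ← heq] at h1
          simpa using h1
      · push_neg at hdist
        obtain ⟨a, b, ha, hb, hab, hne⟩ := hdist
        rcases lt_or_gt_of_ne hne with h | h
        · refine ih (b - a) (by omega) (i + a) (by omega) ?_
          rw [hab]; congr 1; omega
        · refine ih (a - b) (by omega) (i + b) (by omega) ?_
          rw [← hab]; congr 1; omega
  intro a b hab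
  by_contra hne
  rcases lt_or_gt_of_ne hne with h | h
  · exact key (b - a) a (by omega) (by rw [hab]; congr 1; omega)
  · exact key (a - b) b (by omega) (by rw [← hab]; congr 1; omega)

lemma match_unique_fst {M : Set (P × P)} (hm : IsMatching M) {z z' a : P}
    (h : (z, a) ∈ M) (h' : (z', a) ∈ M) : z = z' := by
  by_contra hne
  exact absurd rfl (hm.2 _ h _ h' (fun he => hne (congrArg Prod.fst he))).2.2.2

/-- Double an `Mplus`-walk into a walk in `H_M(P)`. -/
lemma double_walk {M : Set (P × P)} {deg : P → ℕ} (hm : IsMatching M) {r : ℕ → P}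
    (hr : ∀ i, r (i + 1) ∈ Mplus M deg (r i)) :
    ∃ t : ℕ → P, (∀ i, HasseM M (t i) (t (i + 1))) ∧ ∀ i, t (2 * i) = r i := by
  choose z hz1 _ hz3 hz4 using hr
  refine ⟨fun n => if n % 2 = 0 then r (n / 2) else z (n / 2), fun i => ?_, fun i => ?_⟩
  · rcases Nat.even_or_odd i with ⟨k, hk⟩ | ⟨k, hk⟩
    · have e1 : i % 2 = 0 := by omega
      have e2 : (i + 1) % 2 = 1 := by omega
      have e3 : i / 2 = k := by omega
      have e4 : (i + 1) / 2 = k := by omega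
      simp only [e1, e2, e3, e4, if_pos rfl]
      norm_num
      exact Or.inr (hz1 k)
    · have e1 : i % 2 = 1 := by omega
      have e2 : (i + 1) % 2 = 0 := by omega
      have e3 : i / 2 = k := by omega
      have e4 : (i + 1) / 2 = k + 1 := by omega
      simp only [e1, e2, e3, e4]
      norm_num
      refine Or.inl ⟨hz4 k, fun hmem => ?_⟩
      have hne : ((z k, r k) : P × P) ≠ (z k, r (k + 1)) := by
        intro he
        exact (hz3 k) (congrArg Prod.snd he).symm
      exact absurd rfl (hm.2 _ (hz1 k) _ hmem hne).1
  · have e1 : (2 * i) % 2 = 0 := by omega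
    have e2 : (2 * i) / 2 = i := by omega
    simp [e1, e2]

lemma mplus_fin {M : Set (P × P)} {deg : P → ℕ} (hfin : ∀ x : P, (Set.Iic x).Finite)
    (hm : IsMatching M) (y : P) : (Mplus M deg y).Finite := by
  rcases Set.eq_empty_or_nonempty (Mplus M deg y) with h | ⟨w, z, hz, _, _, hw⟩
  · rw [h]; exact Set.finite_empty
  · refine Set.Finite.subset (hfin z) ?_
    rintro v ⟨z', hz', -, -, hv⟩
    have : z' = z := match_unique_fst hm hz' hz
    exact le_of_lt (this ▸ hv.lt)

lemma Dk_le {M : Set (P × P)} {deg : P → ℕ} {x : P} {k m : ℕ} (h : k ≤ m) :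
    Dk M deg x k ⊆ Dk M deg x m := by
  induction m with
  | zero => rw [Nat.le_zero.mp h]
  | succ m ih =>
    rcases Nat.lt_or_ge k (m + 1) with h' | h'
    · exact (ih (by omega)).trans Set.subset_union_left
    · rw [show k = m + 1 by omega]

lemma Dk_decomp {M : Set (P × P)} {deg : P → ℕ} {x : P} : ∀ k,
    Dk M deg x k ⊆ {x} ∪ ⋃ y ∈ Mplus M deg x, Dk M deg y k := by
  intro k
  induction k with
  | zero => exact Set.subset_union_left
  | succ k ih =>
    rintro v (hv | hv)
    · rcases ih hv with h | h
      · exact Or.inl h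
      · obtain ⟨y, hy, hvy⟩ := Set.mem_iUnion₂.mp h
        exact Or.inr (Set.mem_biUnion hy (Dk_le (Nat.le_succ k) hvy))
    · simp only [Set.mem_iUnion] at hv
      obtain ⟨w, hw, hvw⟩ := hv
      rcases ih hw with h | h
      · have : v ∈ Mplus M deg x := by rwa [← Set.mem_singleton_iff.mp h]
        exact Or.inr (Set.mem_biUnion this (Dk_le (Nat.zero_le _) rfl))
      · obtain ⟨y, hy, hwy⟩ := Set.mem_iUnion₂.mp h
        exact Or.inr (Set.mem_biUnion hy (Or.inr (Set.mem_biUnion hwy hvw)))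

lemma Dset_decomp {M : Set (P × P)} {deg : P → ℕ} {x : P} :
    Dset M deg x ⊆ {x} ∪ ⋃ y ∈ Mplus M deg x, Dset M deg y := by
  rintro v hv
  obtain ⟨k, hk⟩ : ∃ k, v ∈ Dk M deg x k := by
    simpa [Dset, Set.mem_iUnion] using hv
  rcases Dk_decomp k hk with h | h
  · exact Or.inl h
  · obtain ⟨y, hy, hvy⟩ := Set.mem_iUnion₂.mp h
    exact Or.inr (Set.mem_biUnion hy (Set.mem_iUnion.mpr ⟨k, hvy⟩))

lemma step_infinite {M : Set (P × P)} {deg : P → ℕ} (hfin : ∀ x : P, (Set.Iic x).Finite)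
    (hm : IsMatching M) (y : P) (hinf : (Dset M deg y).Infinite) :
    ∃ z, z ∈ Mplus M deg y ∧ (Dset M deg z).Infinite := by
  by_contra h
  push_neg at h
  refine hinf (Set.Finite.subset ?_ Dset_decomp)
  refine (Set.finite_singleton y).union (Set.Finite.biUnion (mplus_fin hfin hm y) ?_)
  intro z hz
  exact h z hz

end Aux
/-- If `P` is a graded poset with finite principal ideals equipped
with a rayless Morse matching `M`, then for every `x ∈ P` the digraph `D_M(x)`
is acyclic and finite. -/
theorem stmt0 {P : Type*} [PartialOrder P] (deg : P → ℕ) (M : Set (P × P))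
    (hgraded : GradedDeg deg) (hfin : ∀ x : P, (Set.Iic x).Finite)
    (hM : IsMorse M) (hrayless : Rayless (HasseM M)) (x : P) :
    DAcyclic (DArrow M deg x) ∧ (Dset M deg x).Finite := by
  obtain ⟨hmatch, hacy⟩ := hM
  constructor
  · -- acyclicity of D_M(x)
    rintro ⟨n, p, ⟨hpinj, hparr⟩, hclose⟩
    -- the periodic walk along the cycle
    set r : ℕ → P := fun i => p (i % (n + 1)) with hr
    have hmod : ∀ i : ℕ, (i + 1) % (n + 1) = (i % (n + 1) + 1) % (n + 1) := by
      intro i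
      conv_lhs => rw [Nat.add_mod]
      conv_rhs => rw [Nat.add_mod, Nat.mod_mod_of_dvd _ dvd_rfl]
    have hstep : ∀ i, r (i + 1) ∈ Mplus M deg (r i) := by
      intro i
      have hlt : i % (n + 1) < n + 1 := Nat.mod_lt _ (Nat.succ_pos n)
      rcases Nat.lt_or_ge (i % (n + 1)) n with h | h
      · have h2 : (i + 1) % (n + 1) = i % (n + 1) + 1 := by
          rw [hmod]; exact Nat.mod_eq_of_lt (by omega)
        show p ((i + 1) % (n + 1)) ∈ Mplus M deg (p (i % (n + 1)))
        rw [h2]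
        exact (hparr _ h).2
      · have he : i % (n + 1) = n := by omega
        have h2 : (i + 1) % (n + 1) = 0 := by
          rw [hmod, he, Nat.mod_self]
        show p ((i + 1) % (n + 1)) ∈ Mplus M deg (p (i % (n + 1)))
        rw [h2, he]
        exact hclose.2
    obtain ⟨t, ht, ht2⟩ := double_walk hmatch hstep
    have hinj := walk_inj hacy ht
    have : t (2 * 0) = t (2 * (n + 1)) := by
      rw [ht2, ht2]
      show p (0 % (n + 1)) = p ((n + 1) % (n + 1))
      rw [Nat.zero_mod, Nat.mod_self]
    exact absurd (hinj this) (by omega)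
  · -- finiteness of Dset
    by_contra hinf
    replace hinf : (Dset M deg x).Infinite := hinf
    choose g hg1 hg2 using step_infinite (M := M) (deg := deg) hfin hmatch
    let r : ℕ → {y : P // (Dset M deg y).Infinite} :=
      fun n => Nat.rec ⟨x, hinf⟩ (fun _ q => ⟨g q.1 q.2, hg2 q.1 q.2⟩) n
    have hstep : ∀ i, (r (i + 1)).1 ∈ Mplus M deg ((r i)).1 := fun i => hg1 _ _
    obtain ⟨t, ht, _⟩ := double_walk hmatch hstep
    exact hrayless ⟨t, walk_inj hacy ht, ht⟩
end

section
/- If an acyclic digraph D contains a multiray, then the set of equivalence classes of rays in D has cardinality at least 2^ℵ₀ (the cardinality of the continuum). -/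
lemma no_closed_walk {V : Type*} {A : V → V → Prop} (hirr : Irreflexive A)
    (hacyc : DAcyclic A) :
    ∀ n : ℕ, ∀ w : ℕ → V, 0 < n → (∀ i, i < n → A (w i) (w (i+1))) → w n = w 0 → False := by
  intro n
  induction n using Nat.strong_induction_on with
  | _ n IH =>
    intro w hn harr hclosed
    by_cases hinj : ∀ i j, i < j → j ≤ n → (i ≠ 0 ∨ j ≠ n) → w i ≠ w j
    · rcases Nat.lt_or_ge n 2 with h1 | h2
      · -- n = 1
        have : A (w 0) (w 1) := harr 0 (by omega)
        rw [show (1:ℕ) = n by omega, hclosed] at this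
        exact hirr _ this
      · refine hacyc ⟨n - 1, w, ⟨?_, ?_⟩, ?_⟩
        · intro i j hi hj hij
          by_contra hne
          rcases Nat.lt_or_ge i j with h | h
          · exact hinj i j h (by omega) (Or.inr (by omega)) hij
          · exact hinj j i (by omega) (by omega) (Or.inr (by omega)) hij.symm
        · intro i hi; exact harr i (by omega)
        · have : A (w (n-1)) (w (n-1+1)) := harr (n-1) (by omega)
          rwa [show n - 1 + 1 = n by omega, hclosed] at this
    · push_neg at hinj
      obtain ⟨i, j, hij, hjn, hor, heq⟩ := hinj
      rcases Nat.eq_or_lt_of_le hjn with hj | hj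
      · -- j = n, so i ≠ 0
        have hi0 : i ≠ 0 := by rcases hor with h | h; exact h; omega
        exact IH i (by omega) w (by omega) (fun t ht => harr t (by omega))
          (by rw [heq, hj, hclosed])
      · -- j < n : splice out (i, j]
        set w' : ℕ → V := fun t => if t < i then w t else w (t + (j - i)) with hw'
        have hlen : 0 < i + (n - j) := by omega
        have hw'0 : w' 0 = w 0 := by
          by_cases h : 0 < i
          · simp [hw', h]
          · have : i = 0 := by omega
            simp [hw', this, ← heq]
        refine IH (i + (n - j)) (by omega) w' hlen ?_ ?_
        · intro t ht
          by_cases h1 : t + 1 < i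
          · have : w' t = w t := by simp only [hw', if_pos (show t < i by omega)]
            have h2 : w' (t+1) = w (t+1) := by simp only [hw', if_pos h1]
            rw [this, h2]; exact harr t (by omega)
          · by_cases h2 : t + 1 = i
            · have e1 : w' t = w t := by simp only [hw', if_pos (show t < i by omega)]
              have e2 : w' (t+1) = w (t+1) := by
                have : w' (t+1) = w (t + 1 + (j - i)) := by simp only [hw', if_neg (show ¬ (t+1 < i) by omega)]
                rw [this, show t + 1 + (j - i) = j by omega, ← heq, h2]
              rw [e1, e2]; exact harr t (by omega)
            · have e1 : w' t = w (t + (j - i)) := by simp only [hw', if_neg (show ¬ (t < i) by omega)]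
              have e2 : w' (t+1) = w (t + 1 + (j - i)) := by simp only [hw', if_neg (show ¬ (t+1 < i) by omega)]
              rw [e1, e2, show t + 1 + (j-i) = t + (j-i) + 1 by omega]
              exact harr _ (by omega)
        · have : w' (i + (n - j)) = w (i + (n-j) + (j-i)) := by
            simp only [hw', if_neg (show ¬ (i + (n - j) < i) by omega)]
          rw [this, show i + (n-j) + (j-i) = n by omega, hclosed, hw'0]

section DWalk
variable {V : Type*} {A : V → V → Prop}

structure DWalk (A : V → V → Prop) (x y : V) : Type _ where
  n : ℕ
  f : ℕ → V
  h0 : f 0 = x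
  hn : f n = y
  arr : ∀ i, i < n → A (f i) (f (i+1))

def DWalk.comp {x y z : V} (w1 : DWalk A x y) (w2 : DWalk A y z) : DWalk A x z where
  n := w1.n + w2.n
  f := fun t => if t < w1.n then w1.f t else w2.f (t - w1.n)
  h0 := by
    by_cases h : 0 < w1.n
    · simp [h, w1.h0]
    · have : w1.n = 0 := by omega
      simp [this, w2.h0, ← w1.hn, this, w1.h0]
  hn := by
    by_cases h : w2.n = 0
    · by_cases h1 : w1.n = 0
      · simp [h, h1, w2.h0, ← w2.hn, h]
      · simp [h, w2.h0, ← w2.hn, h]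
    · have : ¬ (w1.n + w2.n < w1.n) := by omega
      simp [this, ← w2.hn]
  arr := by
    intro i hi
    by_cases h : i + 1 < w1.n
    · have h' : i < w1.n := by omega
      simp only [h, h', if_pos]
      exact w1.arr i h'
    · by_cases h2 : i < w1.n
      · -- i + 1 = w1.n
        have e : i + 1 = w1.n := by omega
        simp only [if_pos h2, if_neg h]
        rw [show i + 1 - w1.n = 0 from by omega, w2.h0]
        have := w1.arr i h2
        rw [e, w1.hn] at this
        exact this
      · simp only [if_neg h2, if_neg (by omega : ¬ (i + 1 < w1.n))]
        rw [show i + 1 - w1.n = i - w1.n + 1 from by omega]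
        exact w2.arr (i - w1.n) (by omega)

def DWalk.single {x y : V} (h : A x y) : DWalk A x y where
  n := 1
  f := fun t => if t = 0 then x else y
  h0 := rfl
  hn := rfl
  arr := by intro i hi; simp [show i = 0 by omega, h]

def DWalk.sub (p : ℕ → V) {m : ℕ} (harr : ∀ i, i < m → A (p i) (p (i+1)))
    {a b : ℕ} (hab : a ≤ b) (hbm : b ≤ m) : DWalk A (p a) (p b) where
  n := b - a
  f := fun t => p (a + t)
  h0 := by simp
  hn := by show p (a + (b - a)) = p b; rw [show a + (b - a) = b by omega]
  arr := by intro i hi; exact harr (a + i) (by omega)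

lemma DWalk.false {x : V} (hirr : Irreflexive A) (hacyc : DAcyclic A)
    (w : DWalk A x x) (h : 0 < w.n) : False :=
  no_closed_walk hirr hacyc w.n w.f h w.arr (by rw [w.h0, w.hn])

end DWalk





section Jump
variable {V : Type*} {A : V → V → Prop} {r : ℕ → V}

def DWalk.cast {V : Type*} {A : V → V → Prop} {x y x' y' : V}
    (w : DWalk A x y) (hx : x = x') (hy : y = y') : DWalk A x' y' where
  n := w.n
  f := w.f
  h0 := hx ▸ w.h0
  hn := hy ▸ w.hn
  arr := w.arr

def rayWalk (hray : IsRay A r) {a b : ℕ} (hab : a ≤ b) : DWalk A (r a) (r b) :=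
  DWalk.sub r (m := b) (fun i _ => hray.2 i) hab le_rfl

structure Jump (A : V → V → Prop) (r : ℕ → V) where
  s : ℕ
  t : ℕ
  len : ℕ
  q : ℕ → V
  hst : s < t
  hlen : 2 ≤ len
  h0 : q 0 = r s
  hend : q len = r t
  harr : ∀ i, i < len → A (q i) (q (i+1))
  hinj : ∀ i j, i ≤ len → j ≤ len → q i = q j → i = j
  hoff : ∀ i, 0 < i → i < len → ∀ m, q i ≠ r m

lemma jump_of_bypass (hirr : Irreflexive A) (hacyc : DAcyclic A) (hray : IsRay A r)
    {n : ℕ} (hb : HasBypassAt A r n) : ∃ J : Jump A r, n ≤ J.s := by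
  classical
  obtain ⟨k, hk, m, p, hp, hp0, hpm, i, him, hioff⟩ := hb
  have hbound : ∀ a, a ≤ m → ∀ u, p a = r u → n ≤ u ∧ u ≤ n + k := by
    intro a ha u hu
    constructor
    · by_contra h
      push_neg at h
      let w1 : DWalk A (r n) (r u) :=
        (DWalk.sub p hp.2 (Nat.zero_le a) ha).cast hp0 hu
      let w2 : DWalk A (r u) (r n) := rayWalk hray (le_of_lt h)
      exact (w1.comp w2).false hirr hacyc (by show 0 < (a - 0) + (n - u); omega)
    · by_contra h
      push_neg at h
      let w1 : DWalk A (r u) (r (n+k)) := (DWalk.sub p hp.2 ha le_rfl).cast hu hpm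
      let w2 : DWalk A (r (n+k)) (r u) := rayWalk hray (le_of_lt h)
      exact (w1.comp w2).false hirr hacyc (by show 0 < (m - a) + (u - (n+k)); omega)
  set P : ℕ → Prop := fun a => ∃ u, p a = r u with hPdef
  have hP0 : P 0 := ⟨n, hp0⟩
  have hPi : ¬ P i := fun ⟨u, hu⟩ => hioff u hu
  set a := Nat.findGreatest P i with hadef
  have ha_le : a ≤ i := Nat.findGreatest_le i
  have haP : P a := Nat.findGreatest_spec (Nat.zero_le i) hP0
  have ha_lt : a < i := lt_of_le_of_ne ha_le (fun h => hPi (h ▸ haP))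
  have hex : ∃ d, P (i + d) := ⟨m - i, by rw [show i + (m - i) = m by omega]; exact ⟨n+k, hpm⟩⟩
  set b := i + Nat.find hex with hbdef
  have hbP : P b := Nat.find_spec hex
  have hb_le : b ≤ m := by
    have : Nat.find hex ≤ m - i := Nat.find_le (by rw [show i + (m - i) = m by omega]; exact ⟨n+k, hpm⟩)
    omega
  have hi_lt_b : i < b := by
    rcases Nat.eq_zero_or_pos (Nat.find hex) with h | h
    · exfalso; apply hPi; have := hbP; rwa [hbdef, h, Nat.add_zero] at this
    · omega
  have hint : ∀ c, a < c → c < b → ¬ P c := by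
    intro c h1 h2 hc
    by_cases hci : c ≤ i
    · exact Nat.findGreatest_is_greatest h1 hci hc
    · have : c = i + (c - i) := by omega
      exact Nat.find_min hex (by omega : c - i < Nat.find hex) (by rwa [← this])
  obtain ⟨u, hu⟩ := haP
  obtain ⟨v, hv⟩ := hbP
  have hab : a < b := by omega
  have huv : u < v := by
    rcases Nat.lt_trichotomy u v with h | h | h
    · exact h
    · exfalso; have : p a = p b := by rw [hu, hv, h]
      have := hp.1 a b (by omega) hb_le this; omega
    · exfalso
      let w1 : DWalk A (r u) (r v) := (DWalk.sub p hp.2 (le_of_lt hab) hb_le).cast hu hv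
      let w2 : DWalk A (r v) (r u) := rayWalk hray (le_of_lt h)
      exact (w1.comp w2).false hirr hacyc (by show 0 < (b - a) + (u - v); omega)
  refine ⟨⟨u, v, b - a, fun j => p (a + j), huv, by omega, by simpa using hu,
    by show p (a + (b - a)) = r v; rw [show a + (b - a) = b by omega]; exact hv, ?_, ?_, ?_⟩, (hbound a (by omega) u hu).1⟩
  · intro j hj; exact hp.2 (a + j) (by omega)
  · intro i' j' hi' hj' h
    have := hp.1 (a + i') (a + j') (by omega) (by omega) h
    omega
  · intro j hj0 hjl mm heq
    exact hint (a + j) (by omega) (by omega) ⟨mm, heq⟩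

lemma jump_chain (hirr : Irreflexive A) (hacyc : DAcyclic A) (hray : IsRay A r)
    (hmul : ∀ N : ℕ, ∃ i : ℕ, HasBypassAt A r (N + i)) :
    ∃ J : ℕ → Jump A r, ∀ l, (J l).t ≤ (J (l+1)).s := by
  have step : ∀ N : ℕ, ∃ J : Jump A r, N ≤ J.s := by
    intro N
    obtain ⟨i, hi⟩ := hmul N
    obtain ⟨J, hJ⟩ := jump_of_bypass hirr hacyc hray hi
    exact ⟨J, le_trans (Nat.le_add_right N i) hJ⟩
  choose F hF using step
  exact ⟨fun l => Nat.rec (F 0) (fun _ prev => F prev.t) l, fun l => hF _⟩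

variable {J : ℕ → Jump A r}

lemma t_le_s (hchain : ∀ l, (J l).t ≤ (J (l+1)).s) : ∀ j l, j < l → (J j).t ≤ (J l).s := by
  intro j l hjl
  induction l with
  | zero => omega
  | succ l IH =>
    rcases Nat.lt_or_ge j l with h | h
    · exact le_trans (IH h) (le_trans (le_of_lt (J l).hst) (hchain l))
    · have : j = l := by omega
      rw [this]; exact hchain l

lemma jump_disjoint (hirr : Irreflexive A) (hacyc : DAcyclic A) (hray : IsRay A r)
    (hchain : ∀ l, (J l).t ≤ (J (l+1)).s) :
    ∀ j l, j < l → ∀ a b, 0 < a → a < (J j).len → 0 < b → b < (J l).len →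
      (J j).q a ≠ (J l).q b := by
  intro j l hjl a b _ ha2 hb1 hb2 heq
  let w1 : DWalk A ((J j).q a) (r (J j).t) :=
    (DWalk.sub (J j).q (J j).harr (le_of_lt ha2) le_rfl).cast rfl (J j).hend
  let w2 : DWalk A (r (J j).t) (r (J l).s) := rayWalk hray (t_le_s hchain j l hjl)
  let w3 : DWalk A (r (J l).s) ((J j).q a) :=
    (DWalk.sub (J l).q (J l).harr (Nat.zero_le b) (le_of_lt hb2)).cast (J l).h0 heq.symm
  exact ((w1.comp w2).comp w3).false hirr hacyc
    (by show 0 < ((J j).len - a + ((J l).s - (J j).t)) + (b - 0); omega)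

end Jump



namespace JRay

variable {V : Type*} {A : V → V → Prop} {r : ℕ → V}

def e (J : ℕ → Jump A r) : ℕ → ℕ
  | 0 => 0
  | (l+1) => (J l).t

def blen (J : ℕ → Jump A r) (S : ℕ → Bool) (l : ℕ) : ℕ :=
  ((J l).s - e J l) + (if S l then (J l).len else (J l).t - (J l).s)

def cum (J : ℕ → Jump A r) (S : ℕ → Bool) : ℕ → ℕ
  | 0 => 0
  | (l+1) => cum J S l + blen J S l

def blk (J : ℕ → Jump A r) (S : ℕ → Bool) (n : ℕ) : ℕ :=
  Nat.findGreatest (fun l => cum J S l ≤ n) n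

def ray (J : ℕ → Jump A r) (S : ℕ → Bool) (n : ℕ) : V :=
  if S (blk J S n) ∧ (J (blk J S n)).s - e J (blk J S n) < n - cum J S (blk J S n)
  then (J (blk J S n)).q ((n - cum J S (blk J S n)) - ((J (blk J S n)).s - e J (blk J S n)))
  else r (e J (blk J S n) + (n - cum J S (blk J S n)))

variable {J : ℕ → Jump A r} {S : ℕ → Bool}

lemma e_le_s (hchain : ∀ l, (J l).t ≤ (J (l+1)).s) : ∀ l, e J l ≤ (J l).s := by
  intro l
  cases l with
  | zero => exact Nat.zero_le _
  | succ l => exact hchain l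

lemma blen_pos (l : ℕ) : 0 < blen J S l := by
  unfold blen
  by_cases h : S l = true
  · rw [if_pos h]; have := (J l).hlen; omega
  · rw [if_neg h]; have := (J l).hst; omega

lemma cum_succ (l : ℕ) : cum J S (l+1) = cum J S l + blen J S l := rfl

lemma cum_lt_cum {l l' : ℕ} (h : l < l') : cum J S l < cum J S l' := by
  induction l' with
  | zero => omega
  | succ l' IH =>
    rcases Nat.lt_or_ge l l' with h2 | h2
    · exact lt_trans (IH h2) (by rw [cum_succ]; have := blen_pos (J := J) (S := S) l'; omega)
    · have : l = l' := by omega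
      subst this
      rw [cum_succ]; have := blen_pos (J := J) (S := S) l; omega

lemma le_cum (l : ℕ) : l ≤ cum J S l := by
  induction l with
  | zero => omega
  | succ l IH => have := blen_pos (J := J) (S := S) l; rw [cum_succ]; omega

lemma blk_spec (n : ℕ) : cum J S (blk J S n) ≤ n ∧ n < cum J S (blk J S n + 1) := by
  constructor
  · exact Nat.findGreatest_spec (P := fun l => cum J S l ≤ n) (Nat.zero_le n) (Nat.zero_le n)
  · by_contra h
    push_neg at h
    have h1 : blk J S n + 1 ≤ n := le_trans (le_cum _) h
    have h2 : blk J S n + 1 ≤ blk J S n :=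
      Nat.le_findGreatest (P := fun l => cum J S l ≤ n) h1 h
    omega

lemma cum_le_cum {l l' : ℕ} (h : l ≤ l') : cum J S l ≤ cum J S l' := by
  rcases Nat.eq_or_lt_of_le h with h' | h'
  · rw [h']
  · exact le_of_lt (cum_lt_cum h')

lemma blk_eq {l n : ℕ} (h1 : cum J S l ≤ n) (h2 : n < cum J S (l+1)) : blk J S n = l := by
  obtain ⟨g1, g2⟩ := blk_spec (J := J) (S := S) n
  rcases Nat.lt_trichotomy (blk J S n) l with h | h | h
  · have : cum J S (blk J S n + 1) ≤ cum J S l := cum_le_cum h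
    omega
  · exact h
  · have : cum J S (l+1) ≤ cum J S (blk J S n) := cum_le_cum h
    omega

lemma val_q {l d : ℕ} (hd : d < blen J S l) (hS : S l = true)
    (hd2 : (J l).s - e J l < d) :
    ray J S (cum J S l + d) = (J l).q (d - ((J l).s - e J l)) := by
  have hblk : blk J S (cum J S l + d) = l :=
    blk_eq (by omega) (by rw [cum_succ]; omega)
  have hd3 : cum J S l + d - cum J S l = d := by omega
  rw [ray, hblk, hd3, if_pos ⟨hS, hd2⟩]

lemma val_r {l d : ℕ} (hd : d < blen J S l) (hd2 : ¬ (S l = true) ∨ d ≤ (J l).s - e J l) :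
    ray J S (cum J S l + d) = r (e J l + d) := by
  have hblk : blk J S (cum J S l + d) = l :=
    blk_eq (by omega) (by rw [cum_succ]; omega)
  have hd3 : cum J S l + d - cum J S l = d := by omega
  rw [ray, hblk, hd3, if_neg]
  rintro ⟨c1, c2⟩
  rcases hd2 with h | h
  · exact h c1
  · omega

lemma blen_S {l : ℕ} (h : S l = true) : blen J S l = ((J l).s - e J l) + (J l).len := by
  simp [blen, h]

lemma blen_nS {l : ℕ} (h : S l = false) : blen J S l = ((J l).s - e J l) + ((J l).t - (J l).s) := by
  simp [blen, h]

lemma pos_decomp (n : ℕ) : ∃ l d, d < blen J S l ∧ n = cum J S l + d := by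
  obtain ⟨g1, g2⟩ := blk_spec (J := J) (S := S) n
  exact ⟨blk J S n, n - cum J S (blk J S n), by rw [cum_succ] at g2; omega, by omega⟩

lemma ray_arr (hray : IsRay A r) (hchain : ∀ l, (J l).t ≤ (J (l+1)).s) (n : ℕ) :
    A (ray J S n) (ray J S (n+1)) := by
  obtain ⟨l, d, hd, rfl⟩ := pos_decomp (J := J) (S := S) n
  have hes := e_le_s (J := J) hchain l
  have hst := (J l).hst
  have hlen := (J l).hlen
  rcases Nat.lt_or_ge (d+1) (blen J S l) with hlt | hge
  · -- stay within block l
    by_cases hS : S l = true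
    · rw [blen_S hS] at hlt
      rcases Nat.lt_trichotomy d ((J l).s - e J l) with h | h | h
      · rw [val_r hd (Or.inr (by omega)),
          show cum J S l + d + 1 = cum J S l + (d+1) by omega,
          val_r (by rw [blen_S hS]; omega) (Or.inr (by omega)),
          show e J l + (d+1) = e J l + d + 1 by omega]
        exact hray.2 _
      · rw [val_r hd (Or.inr (by omega)),
          show cum J S l + d + 1 = cum J S l + (d+1) by omega,
          val_q (by rw [blen_S hS]; omega) hS (by omega),
          show d + 1 - ((J l).s - e J l) = 1 by omega]
        have h0 := (J l).h0
        have : e J l + d = (J l).s := by omega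
        rw [this, ← h0]
        exact (J l).harr 0 (by omega)
      · rw [val_q hd hS h,
          show cum J S l + d + 1 = cum J S l + (d+1) by omega,
          val_q (by rw [blen_S hS]; omega) hS (by omega),
          show d + 1 - ((J l).s - e J l) = (d - ((J l).s - e J l)) + 1 by omega]
        exact (J l).harr _ (by omega)
    · have hS' : S l = false := by simp at hS; exact hS
      rw [blen_nS hS'] at hlt
      rw [val_r hd (Or.inl (by simp [hS'])),
        show cum J S l + d + 1 = cum J S l + (d+1) by omega,
        val_r (by rw [blen_nS hS']; omega) (Or.inl (by simp [hS'])),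
        show e J l + (d+1) = e J l + d + 1 by omega]
      exact hray.2 _
  · -- cross into block l+1
    have hd1 : d + 1 = blen J S l := by omega
    have hnext : ray J S (cum J S l + d + 1) = r ((J l).t) := by
      have : cum J S l + d + 1 = cum J S (l+1) + 0 := by rw [cum_succ]; omega
      rw [this, val_r (blen_pos _) (Or.inr (Nat.zero_le _))]
      rfl
    rw [hnext]
    by_cases hS : S l = true
    · rw [blen_S hS] at hd1
      have : (J l).s - e J l < d := by omega
      rw [val_q hd hS this, show d - ((J l).s - e J l) = (J l).len - 1 by omega]
      have := (J l).harr ((J l).len - 1) (by omega)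
      rwa [show (J l).len - 1 + 1 = (J l).len by omega, (J l).hend] at this
    · have hS' : S l = false := by simp at hS; exact hS
      rw [blen_nS hS'] at hd1
      rw [val_r hd (Or.inl (by simp [hS']))]
      have : e J l + d = (J l).t - 1 := by omega
      rw [this]
      have := hray.2 ((J l).t - 1)
      rwa [show (J l).t - 1 + 1 = (J l).t by omega] at this

lemma t_mono_le (hchain : ∀ l, (J l).t ≤ (J (l+1)).s) {j l : ℕ} (h : j ≤ l) :
    (J j).t ≤ (J l).t := by
  rcases Nat.eq_or_lt_of_le h with h' | h'
  · rw [h']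
  · exact le_trans (t_le_s hchain j l h') (le_of_lt (J l).hst)

lemma t_le_e (hchain : ∀ l, (J l).t ≤ (J (l+1)).s) {j l : ℕ} (h : j < l) :
    (J j).t ≤ e J l := by
  cases l with
  | zero => omega
  | succ l => exact t_mono_le hchain (by omega)

/-- classification of values of `ray J S`. -/
lemma ray_cases (hchain : ∀ l, (J l).t ≤ (J (l+1)).s) (n : ℕ) :
    ∀ l d, d < blen J S l → n = cum J S l + d →
    (S l = true ∧ (J l).s - e J l < d ∧
      ray J S n = (J l).q (d - ((J l).s - e J l)) ∧
      0 < d - ((J l).s - e J l) ∧ d - ((J l).s - e J l) < (J l).len) ∨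
    (ray J S n = r (e J l + d) ∧ e J l ≤ e J l + d ∧ e J l + d < (J l).t) := by
  intro l d hd hn
  have hes := e_le_s (J := J) hchain l
  have hst := (J l).hst
  by_cases hS : S l = true
  · rcases Nat.lt_or_ge ((J l).s - e J l) d with h | h
    · left
      refine ⟨hS, h, by rw [hn]; exact val_q hd hS h, by omega, ?_⟩
      rw [blen_S hS] at hd; omega
    · right
      refine ⟨by rw [hn]; exact val_r hd (Or.inr h), by omega, by omega⟩
  · right
    have hS' : S l = false := by simp at hS; exact hS
    rw [blen_nS hS'] at hd
    refine ⟨by rw [hn]; exact val_r (by rw [blen_nS hS']; omega) (Or.inl hS), by omega, by omega⟩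

lemma ray_inj (hirr : Irreflexive A) (hacyc : DAcyclic A) (hray : IsRay A r)
    (hchain : ∀ l, (J l).t ≤ (J (l+1)).s) : Function.Injective (ray J S) := by
  intro n n' heq
  obtain ⟨l, d, hd, hn⟩ := pos_decomp (J := J) (S := S) n
  obtain ⟨l', d', hd', hn'⟩ := pos_decomp (J := J) (S := S) n'
  rcases ray_cases (S := S) hchain n l d hd hn with ⟨hS, hlt, hv, hu1, hu2⟩ | ⟨hv, hb1, hb2⟩ <;>
    rcases ray_cases (S := S) hchain n' l' d' hd' hn' with ⟨hS', hlt', hv', hu1', hu2'⟩ | ⟨hv', hb1', hb2'⟩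
  · -- both q-interior
    rw [hv, hv'] at heq
    rcases Nat.lt_trichotomy l l' with h | h | h
    · exact absurd heq (jump_disjoint hirr hacyc hray hchain l l' h _ _ hu1 hu2 hu1' hu2')
    · subst h
      have := (J l).hinj _ _ (by omega) (by omega) heq
      omega
    · exact absurd heq.symm (jump_disjoint hirr hacyc hray hchain l' l h _ _ hu1' hu2' hu1 hu2)
  · rw [hv, hv'] at heq
    exact absurd heq ((J l).hoff _ hu1 hu2 _)
  · rw [hv, hv'] at heq
    exact absurd heq.symm ((J l').hoff _ hu1' hu2' _)
  · -- both ray vertices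
    rw [hv, hv'] at heq
    have hidx := hray.1 heq
    have hll : l = l' := by
      rcases Nat.lt_trichotomy l l' with h | h | h
      · have := t_le_e (J := J) hchain h; omega
      · exact h
      · have := t_le_e (J := J) hchain h; omega
    subst hll
    omega

lemma is_ray (hirr : Irreflexive A) (hacyc : DAcyclic A) (hray : IsRay A r)
    (hchain : ∀ l, (J l).t ≤ (J (l+1)).s) : IsRay A (ray J S) :=
  ⟨ray_inj hirr hacyc hray hchain, ray_arr hray hchain⟩

lemma mem_q1 (hchain : ∀ l, (J l).t ≤ (J (l+1)).s) {l : ℕ} (hS : S l = true) :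
    ray J S (cum J S l + (((J l).s - e J l) + 1)) = (J l).q 1 := by
  have hlen := (J l).hlen
  rw [val_q (by rw [blen_S hS]; omega) hS (by omega)]
  congr 1
  omega

lemma not_equiv (hirr : Irreflexive A) (hacyc : DAcyclic A) (hray : IsRay A r)
    (hchain : ∀ l, (J l).t ≤ (J (l+1)).s) {S T : ℕ → Bool}
    (hdiff : ∀ M : ℕ, ∃ l, M ≤ l ∧ S l = true ∧ T l = false) :
    ¬ RayEquiv (ray J S) (ray J T) := by
  rintro ⟨M, N, hMN⟩
  obtain ⟨l, hlM, hSl, hTl⟩ := hdiff M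
  set pos := cum J S l + (((J l).s - e J l) + 1) with hpos
  have hposM : M ≤ pos := by
    have hcl := le_cum (J := J) (S := S) l
    omega
  have h1 : ray J S pos = (J l).q 1 := mem_q1 hchain hSl
  have h2 := hMN (pos - M)
  rw [show M + (pos - M) = pos by omega, h1] at h2
  -- h2 : (J l).q 1 = ray J T (N + (pos - M))
  have hlen := (J l).hlen
  obtain ⟨l', d', hd', hn'⟩ := pos_decomp (J := J) (S := T) (N + (pos - M))
  rcases ray_cases (S := T) hchain (N + (pos - M)) l' d' hd' hn' with
    ⟨hS', hlt', hv', hu1', hu2'⟩ | ⟨hv', hb1', hb2'⟩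
  · rw [hv'] at h2
    rcases Nat.lt_trichotomy l l' with h | h | h
    · exact jump_disjoint hirr hacyc hray hchain l l' h _ _ (by omega) (by omega) hu1' hu2' h2
    · subst h; rw [hS'] at hTl; exact Bool.true_eq_false.mp hTl
    · exact jump_disjoint hirr hacyc hray hchain l' l h _ _ hu1' hu2' (by omega) (by omega) h2.symm
  · rw [hv'] at h2
    exact (J l).hoff 1 (by omega) (by omega) _ h2

end JRay





def pcode (x : ℕ → Bool) (n : ℕ) : ℕ :=
  Nat.pair n (Encodable.encode (List.ofFn fun i : Fin n => x i))

lemma pcode_ge (x : ℕ → Bool) (n : ℕ) : n ≤ pcode x n := Nat.left_le_pair _ _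

lemma pcode_inj {x y : ℕ → Bool} {n m : ℕ} (h : pcode x n = pcode y m) :
    n = m ∧ ∀ i, i < n → x i = y i := by
  unfold pcode at h
  rw [Nat.pair_eq_pair] at h
  obtain ⟨h1, h2⟩ := h
  subst h1
  have h3 := Encodable.encode_injective h2
  refine ⟨rfl, fun i hi => ?_⟩
  exact congrFun (List.ofFn_inj.mp h3) ⟨i, hi⟩

open Classical in
noncomputable def chi (x : ℕ → Bool) : ℕ → Bool := fun l => decide (∃ n, pcode x n = l)

lemma chi_diff {x y : ℕ → Bool} (hxy : x ≠ y) (M : ℕ) :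
    ∃ l, M ≤ l ∧ chi x l = true ∧ chi y l = false := by
  have hex : ∃ n₀, x n₀ ≠ y n₀ := by
    by_contra h; push_neg at h; exact hxy (funext h)
  obtain ⟨n₀, hn₀⟩ := hex
  refine ⟨pcode x (max M (n₀+1)), le_trans (le_max_left _ _) (pcode_ge _ _), ?_, ?_⟩
  · simp only [chi, decide_eq_true_eq]
    exact ⟨_, rfl⟩
  · simp only [chi, decide_eq_false_iff_not]
    rintro ⟨m, hm⟩
    obtain ⟨h1, h2⟩ := pcode_inj hm
    exact hn₀ (h2 n₀ (by omega)).symm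


/-- If an acyclic digraph `D` contains a multiray, then the set of
equivalence classes of rays in `D` has cardinality at least `2^ℵ₀`. -/
theorem stmt1 {V : Type*} (A : V → V → Prop) (hirr : Irreflexive A)
    (hacyc : DAcyclic A) (r : ℕ → V) (hr : IsMultiray A r) :
    Cardinal.continuum ≤ Cardinal.mk (RayClasses A) := by
  obtain ⟨hray, hmul⟩ := hr
  obtain ⟨J, hchain⟩ := jump_chain hirr hacyc hray hmul
  set Φ : (ℕ → Bool) → RayClasses A := fun x =>
    ⟨{s | IsRay A s ∧ RayEquiv (JRay.ray J (chi x)) s},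
      ⟨JRay.ray J (chi x), JRay.is_ray hirr hacyc hray hchain, rfl⟩⟩ with hΦ
  have hΦinj : Function.Injective Φ := by
    intro x y hxy
    by_contra hne
    have hmem : JRay.ray J (chi x) ∈ (Φ x : Set (ℕ → V)) :=
      ⟨JRay.is_ray hirr hacyc hray hchain, ⟨0, 0, fun i => rfl⟩⟩
    rw [hxy] at hmem
    have hequiv : RayEquiv (JRay.ray J (chi y)) (JRay.ray J (chi x)) := hmem.2
    exact JRay.not_equiv hirr hacyc hray hchain
      (fun M => chi_diff (Ne.symm hne) M) hequiv
  have hmk : Cardinal.mk (ℕ → Bool) = Cardinal.continuum := by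
    rw [Cardinal.mk_arrow, Cardinal.mk_bool, Cardinal.mk_nat, Cardinal.lift_uzero,
      Cardinal.lift_uzero, Cardinal.two_power_aleph0]
  have hle : Cardinal.lift (Cardinal.mk (ℕ → Bool)) ≤ Cardinal.lift (Cardinal.mk (RayClasses A)) :=
    Cardinal.lift_mk_le'.mpr ⟨⟨Φ, hΦinj⟩⟩
  rwa [hmk, Cardinal.lift_continuum, Cardinal.lift_uzero] at hle
end

section
/- If an acyclic digraph D has only finitely many equivalence classes of rays, then D contains no multiray. -/
section Stmt2Aux

section WalkLemmas

variable {V : Type*} {A : V → V → Prop}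

/-- A walk of length `l`. -/
def IsWalkOn (A : V → V → Prop) (l : ℕ) (w : ℕ → V) : Prop := ∀ i < l, A (w i) (w (i + 1))

lemma noClosedWalk (hacyc : DAcyclic A) :
    ∀ l : ℕ, 0 < l → ∀ w : ℕ → V, IsWalkOn A l w → w l = w 0 → False := by
  intro l
  induction l using Nat.strong_induction_on with
  | _ l ih =>
    intro hl w hw hcl
    by_cases hrep : ∃ i j, i < j ∧ j ≤ l ∧ w i = w j ∧ (0 < i ∨ j < l)
    · obtain ⟨i, j, hij, hjl, heq, hside⟩ := hrep
      refine ih (j - i) (by omega) (by omega) (fun t => w (i + t)) ?_ ?_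
      · intro x hx
        simpa [Nat.add_assoc] using hw (i + x) (by omega)
      · show w (i + (j - i)) = w (i + 0)
        rw [Nat.add_zero, show i + (j - i) = j by omega]
        exact heq.symm
    · push_neg at hrep
      refine hacyc ⟨l - 1, w, ⟨fun i j hi hj hij => ?_, fun i hi => hw i (by omega)⟩, ?_⟩
      · by_contra hne
        rcases Nat.lt_or_ge i j with h | h
        · have := hrep i j h (by omega) hij
          omega
        · have := hrep j i (by omega) (by omega) hij.symm
          omega
      · have h1 := hw (l - 1) (by omega)
        rwa [show l - 1 + 1 = l by omega, hcl] at h1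

lemma IsWalkOn.concat {l1 l2 : ℕ} {w1 w2 : ℕ → V} (h1 : IsWalkOn A l1 w1)
    (h2 : IsWalkOn A l2 w2) (h : w1 l1 = w2 0) :
    ∃ w : ℕ → V, IsWalkOn A (l1 + l2) w ∧ w 0 = w1 0 ∧ w (l1 + l2) = w2 l2 := by
  refine ⟨fun t => if t ≤ l1 then w1 t else w2 (t - l1), ?_, by simp, ?_⟩
  · intro i hi
    rcases Nat.lt_or_ge i l1 with hc | hc
    · simp only [if_pos (by omega : i ≤ l1), if_pos (by omega : i + 1 ≤ l1)]
      exact h1 i hc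
    · have hx : ¬ (i + 1 ≤ l1) := by omega
      simp only [if_neg hx]
      have hv : (if i ≤ l1 then w1 i else w2 (i - l1)) = w2 (i - l1) := by
        rcases Nat.eq_or_lt_of_le hc with hc2 | hc2
        · rw [if_pos (by omega), ← hc2, Nat.sub_self, ← h]
        · rw [if_neg (by omega)]
      rw [hv]
      have := h2 (i - l1) (by omega)
      rwa [show i - l1 + 1 = i + 1 - l1 by omega] at this
  · rcases Nat.eq_zero_or_pos l2 with h0 | h0
    · subst h0
      simp [h]
    · simp only [if_neg (by omega : ¬ (l1 + l2 ≤ l1))]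
      congr 1
      omega

lemma ray_walk {r : ℕ → V} (hr : IsRay A r) (j d : ℕ) : IsWalkOn A d (fun x => r (j + x)) := by
  intro i _
  simpa [Nat.add_assoc] using hr.2 (j + i)

lemma noWalkBack (hacyc : DAcyclic A) {r : ℕ → V} (hr : IsRay A r) {L : ℕ} {w : ℕ → V}
    {j j' : ℕ} (hw : IsWalkOn A L w) (h0 : w 0 = r j) (hL : w L = r j') (hle : j' ≤ j) :
    L = 0 ∧ j' = j := by
  obtain ⟨W, hW, hW0, hWend⟩ := hw.concat (ray_walk hr j' (j - j')) (by simpa using hL)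
  by_contra hne
  refine noClosedWalk hacyc (L + (j - j')) (by omega) W hW ?_
  rw [hW0, h0, hWend]
  show r (j' + (j - j')) = r j
  congr 1
  omega

end WalkLemmas


section CleanBypass
variable {V : Type*} {A : V → V → Prop}

lemma cleanBypass (hacyc : DAcyclic A) {r : ℕ → V} (hr : IsRay A r)
    (hby : ∀ N : ℕ, ∃ i : ℕ, HasBypassAt A r (N + i)) (N : ℕ) :
    ∃ (n k m : ℕ) (q : ℕ → V), N ≤ n ∧ 0 < k ∧ 2 ≤ m ∧ IsWalkOn A m q ∧
      q 0 = r n ∧ q m = r (n + k) ∧ ∀ i, 0 < i → i < m → ∀ j, q i ≠ r j := by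
  classical
  obtain ⟨i₀, k, hk, m, p, hpath, hp0, hpm, iOff, hiOffle, hOff⟩ := hby N
  have hparr : ∀ i, i < m → A (p i) (p (i + 1)) := hpath.2
  set n₀ := N + i₀ with hn₀
  have hioff0 : iOff ≠ 0 := fun h => hOff n₀ (by rw [h, hp0])
  have hioffm : iOff ≠ m := fun h => hOff (n₀ + k) (by rw [h, hpm])
  have hiOlt : iOff < m := by omega
  have hiO0 : 0 < iOff := by omega
  set P : ℕ → Prop := fun x => ∃ j, p x = r j with hP
  set a := Nat.findGreatest P iOff with ha
  have hPa : P a := Nat.findGreatest_spec (Nat.zero_le iOff) ⟨n₀, hp0⟩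
  have hale : a ≤ iOff := Nat.findGreatest_le iOff
  have hane : a ≠ iOff := by
    intro h
    obtain ⟨j, hj⟩ := hPa
    rw [h] at hj
    exact hOff j hj
  have haltx : a < iOff := lt_of_le_of_ne hale hane
  have hQex : ∃ x, iOff < x ∧ P x := ⟨m, hiOlt, ⟨n₀ + k, hpm⟩⟩
  set b := Nat.find hQex with hb
  obtain ⟨hbgt, jb, hjb⟩ := Nat.find_spec hQex
  have hble : b ≤ m := Nat.find_min' hQex ⟨hiOlt, ⟨n₀ + k, hpm⟩⟩
  obtain ⟨ja, hja⟩ := hPa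
  have hint : ∀ t, a < t → t < b → ∀ j, p t ≠ r j := by
    intro t hat htb j hpt
    rcases le_or_gt t iOff with h | h
    · exact Nat.findGreatest_is_greatest hat h ⟨j, hpt⟩
    · exact Nat.find_min hQex htb ⟨h, ⟨j, hpt⟩⟩
  have hseg : IsWalkOn A (b - a) (fun x => p (a + x)) := by
    intro x hx
    simpa [Nat.add_assoc] using hparr (a + x) (by omega)
  have hwa : IsWalkOn A a p := fun i hi => hparr i (by omega)
  have hja_ge : n₀ ≤ ja := by
    by_contra hlt
    have := noWalkBack hacyc hr hwa hp0 hja (by omega)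
    omega
  have hseg0 : (fun x => p (a + x)) 0 = r ja := by simpa using hja
  have hsegE : (fun x => p (a + x)) (b - a) = r jb := by
    show p (a + (b - a)) = r jb
    rw [show a + (b - a) = b by omega]
    exact hjb
  have hjab : ja < jb := by
    by_contra hle2
    have := noWalkBack hacyc hr hseg hseg0 hsegE (by omega)
    omega
  refine ⟨ja, jb - ja, b - a, fun x => p (a + x), by omega, by omega, by omega, hseg, hseg0,
    ?_, ?_⟩
  · rw [hsegE, show ja + (jb - ja) = jb by omega]
  · intro i hi0 him j
    exact hint (a + i) (by omega) (by omega) j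

end CleanBypass

section Machine

open Classical in
/-- The transition function of the splicing machine. -/
noncomputable def mstep (T : ℕ → Prop) (s k m : ℕ → ℕ) : ℕ ⊕ ℕ × ℕ → ℕ ⊕ ℕ × ℕ
  | Sum.inl j =>
      if h : ∃ t, T t ∧ s t = j then Sum.inr (h.choose, 1) else Sum.inl (j + 1)
  | Sum.inr (t, i) => if i + 1 < m t then Sum.inr (t, i + 1) else Sum.inl (s t + k t)

/-- The vertex read off from a machine state. -/
def mval (r : ℕ → V) (q : ℕ → ℕ → V) : ℕ ⊕ ℕ × ℕ → V
  | Sum.inl j => r j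
  | Sum.inr (t, i) => q t i

/-- The machine state after `i` steps. -/
noncomputable def mst (T : ℕ → Prop) (s k m : ℕ → ℕ) (i : ℕ) : ℕ ⊕ ℕ × ℕ :=
  (mstep T s k m)^[i] (Sum.inl 0)

/-- The spliced ray. -/
noncomputable def mray (r : ℕ → V) (q : ℕ → ℕ → V) (T : ℕ → Prop) (s k m : ℕ → ℕ)
    (i : ℕ) : V :=
  mval r q (mst T s k m i)

/-- The invariant of the machine. -/
def mgood (T : ℕ → Prop) (m : ℕ → ℕ) : ℕ ⊕ ℕ × ℕ → Prop
  | Sum.inl _ => True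
  | Sum.inr (t, i) => T t ∧ 0 < i ∧ i < m t

variable {r : ℕ → V} {q : ℕ → ℕ → V} {s k m : ℕ → ℕ} {T : ℕ → Prop}

lemma mst_zero : mst T s k m 0 = Sum.inl 0 := rfl

lemma mst_succ (i : ℕ) : mst T s k m (i + 1) = mstep T s k m (mst T s k m i) :=
  Function.iterate_succ_apply' _ _ _

lemma s_mono (hgap : ∀ t, s t + k t ≤ s (t + 1)) (hk : ∀ t, 0 < k t) :
    ∀ {t t' : ℕ}, t < t' → s t + k t ≤ s t' := by
  intro t t' h
  induction t' with
  | zero => omega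
  | succ u ih =>
    rcases Nat.lt_or_ge t u with h2 | h2
    · have := ih h2
      have := hgap u
      have := hk u
      omega
    · have : t = u := by omega
      subst this
      exact hgap t

lemma s_le_mono (hgap : ∀ t, s t + k t ≤ s (t + 1)) (hk : ∀ t, 0 < k t)
    {t t' : ℕ} (h : t ≤ t') : s t ≤ s t' := by
  rcases Nat.eq_or_lt_of_le h with h2 | h2
  · subst h2
    exact le_rfl
  · have := s_mono hgap hk h2
    have := hk t
    omega

lemma s_inj (hgap : ∀ t, s t + k t ≤ s (t + 1)) (hk : ∀ t, 0 < k t) :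
    Function.Injective s := by
  intro t t' h
  by_contra hne
  rcases Nat.lt_or_ge t t' with h2 | h2
  · have := s_mono hgap hk h2
    have := hk t
    omega
  · have := s_mono hgap hk (show t' < t by omega)
    have := hk t'
    omega

lemma mgood_step (hm2 : ∀ t, 2 ≤ m t) (σ : ℕ ⊕ ℕ × ℕ) (h : mgood T m σ) :
    mgood T m (mstep T s k m σ) := by
  match σ with
  | Sum.inl j =>
    simp only [mstep]
    split
    · next h2 =>
      exact ⟨h2.choose_spec.1, by omega, by have := hm2 h2.choose; omega⟩
    · trivial
  | Sum.inr (t, i) =>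
    obtain ⟨hT, h1, h2⟩ := h
    simp only [mstep]
    split
    · next hcond => exact ⟨hT, by omega, hcond⟩
    · trivial

lemma mgood_all (hm2 : ∀ t, 2 ≤ m t) (i : ℕ) : mgood T m (mst T s k m i) := by
  induction i with
  | zero => trivial
  | succ n ihn =>
    rw [mst_succ]
    exact mgood_step hm2 _ ihn

lemma marrow (hr : IsRay A r) (hm2 : ∀ t, 2 ≤ m t) (hq0 : ∀ t, q t 0 = r (s t))
    (hqm : ∀ t, q t (m t) = r (s t + k t)) (hqw : ∀ t, IsWalkOn A (m t) (q t))
    (σ : ℕ ⊕ ℕ × ℕ) (h : mgood T m σ) :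
    A (mval r q σ) (mval r q (mstep T s k m σ)) := by
  match σ with
  | Sum.inl j =>
    simp only [mstep]
    split
    · next h2 =>
      simp only [mval]
      have h3 := h2.choose_spec
      have h4 : q h2.choose 0 = r j := by rw [hq0, h3.2]
      have h5 := hqw h2.choose 0 (by have := hm2 h2.choose; omega)
      rwa [h4] at h5
    · exact hr.2 j
  | Sum.inr (t, i) =>
    obtain ⟨hT, h1, h2⟩ := h
    simp only [mstep]
    split
    · next hcond =>
      simp only [mval]
      exact hqw t i h2
    · next hcond =>
      simp only [mval]
      have him : i + 1 = m t := by omega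
      have h5 := hqw t i h2
      rwa [him, hqm t] at h5

lemma mray_step (hr : IsRay A r) (hm2 : ∀ t, 2 ≤ m t) (hq0 : ∀ t, q t 0 = r (s t))
    (hqm : ∀ t, q t (m t) = r (s t + k t)) (hqw : ∀ t, IsWalkOn A (m t) (q t)) (i : ℕ) :
    A (mray r q T s k m i) (mray r q T s k m (i + 1)) := by
  have := marrow (T := T) (k := k) hr hm2 hq0 hqm hqw (mst T s k m i) (mgood_all hm2 i)
  rwa [mray, mray, mst_succ]

lemma mray_isRay (hacyc : DAcyclic A) (hr : IsRay A r) (hm2 : ∀ t, 2 ≤ m t)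
    (hq0 : ∀ t, q t 0 = r (s t)) (hqm : ∀ t, q t (m t) = r (s t + k t))
    (hqw : ∀ t, IsWalkOn A (m t) (q t)) :
    IsRay A (mray r q T s k m) := by
  constructor
  · intro i j hij
    by_contra hne
    have key : ∀ i j : ℕ, i < j → mray r q T s k m i = mray r q T s k m j → False := by
      intro i j hlt he
      refine noClosedWalk hacyc (j - i) (by omega) (fun t => mray r q T s k m (i + t)) ?_ ?_
      · intro x hx
        simpa [Nat.add_assoc] using mray_step hr hm2 hq0 hqm hqw (i + x)
      · show mray r q T s k m (i + (j - i)) = mray r q T s k m (i + 0)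
        rw [Nat.add_zero, show i + (j - i) = j by omega]
        exact he.symm
    rcases Nat.lt_or_ge i j with h | h
    · exact key i j h hij
    · exact key j i (by omega) hij.symm
  · exact mray_step hr hm2 hq0 hqm hqw

lemma mrun (hm2 : ∀ t, 2 ≤ m t) (hsinj : Function.Injective s) {t i : ℕ} (hT : T t)
    (hst : mst T s k m i = Sum.inl (s t)) :
    (∀ d, 1 ≤ d → d < m t → mst T s k m (i + d) = Sum.inr (t, d)) ∧
      mst T s k m (i + m t) = Sum.inl (s t + k t) := by
  have key : ∀ d, 1 ≤ d → d < m t → mst T s k m (i + d) = Sum.inr (t, d) := by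
    intro d
    induction d with
    | zero => omega
    | succ e ihe =>
      intro _ hd
      rcases Nat.eq_zero_or_pos e with he | he
      · subst he
        rw [show i + (0 + 1) = i + 1 by omega, mst_succ, hst]
        simp only [mstep]
        split
        · next hex =>
          have hc := hex.choose_spec
          have : hex.choose = t := hsinj hc.2
          rw [this]
        · next hex => exact absurd ⟨t, hT, rfl⟩ hex
      · have hprev := ihe (by omega) (by omega)
        rw [show i + (e + 1) = (i + e) + 1 by omega, mst_succ, hprev]
        simp only [mstep]
        rw [if_pos hd]
  refine ⟨key, ?_⟩
  have hm := hm2 t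
  have hlast := key (m t - 1) (by omega) (by omega)
  rw [show i + m t = (i + (m t - 1)) + 1 by omega, mst_succ, hlast]
  simp only [mstep]
  rw [if_neg (by omega)]

lemma mhits (hgap : ∀ t, s t + k t ≤ s (t + 1)) (hk : ∀ t, 0 < k t) (hm2 : ∀ t, 2 ≤ m t)
    (u : ℕ) : ∃ i, mst T s k m i = Sum.inl (s u) := by
  have hsinj := s_inj hgap hk
  have main : ∀ c j i, s u - j = c → mst T s k m i = Sum.inl j → j ≤ s u →
      ∃ i', mst T s k m i' = Sum.inl (s u) := by
    intro c
    induction c using Nat.strong_induction_on with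
    | _ c ihc =>
      intro j i hc hst hju
      rcases Nat.eq_or_lt_of_le hju with he | hlt
      · exact ⟨i, by rw [hst, he]⟩
      · by_cases hex : ∃ t', T t' ∧ s t' = j
        · obtain ⟨t', hT', hst'⟩ := hex
          have hrun := (mrun hm2 hsinj hT' (by rw [hst, hst'])).2
          have ht'u : t' < u := by
            by_contra hge
            have := s_le_mono hgap hk (show u ≤ t' by omega)
            omega
          have hbound := s_mono hgap hk ht'u
          have hkt := hk t'
          exact ihc (s u - (s t' + k t')) (by omega) _ _ rfl hrun (by omega)
        · have hstep : mst T s k m (i + 1) = Sum.inl (j + 1) := by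
            rw [mst_succ, hst]
            simp only [mstep]
            rw [dif_neg hex]
          exact ihc (s u - (j + 1)) (by omega) (j + 1) (i + 1) rfl hstep (by omega)
  exact main (s u) 0 0 rfl mst_zero (Nat.zero_le _)

lemma mvisit (hgap : ∀ t, s t + k t ≤ s (t + 1)) (hk : ∀ t, 0 < k t) (hm2 : ∀ t, 2 ≤ m t)
    {t : ℕ} (hT : T t) : ∃ i, mray r q T s k m i = q t 1 := by
  obtain ⟨i, hi⟩ := mhits (T := T) hgap hk hm2 t
  have := (mrun hm2 (s_inj hgap hk) hT hi).1 1 le_rfl (by have := hm2 t; omega)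
  exact ⟨i + 1, by rw [mray, this]; rfl⟩

lemma mray_range (hm2 : ∀ t, 2 ≤ m t) (i : ℕ) :
    (∃ j, mray r q T s k m i = r j) ∨
      ∃ t i', T t ∧ 0 < i' ∧ i' < m t ∧ mray r q T s k m i = q t i' := by
  have hg := mgood_all (T := T) (s := s) (k := k) hm2 i
  rcases hst : mst T s k m i with j | ⟨t, i'⟩
  · exact Or.inl ⟨j, by rw [mray, hst]; rfl⟩
  · rw [hst] at hg
    exact Or.inr ⟨t, i', hg.1, hg.2.1, hg.2.2, by rw [mray, hst]; rfl⟩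

end Machine


section Stmt2Final
variable {V : Type*} {A : V → V → Prop}

section D2

variable {r : ℕ → V} {q : ℕ → ℕ → V} {s k m : ℕ → ℕ}

lemma interior_disjoint_lt (hacyc : DAcyclic A) (hr : IsRay A r)
    (hgap : ∀ t, s t + k t ≤ s (t + 1)) (hk : ∀ t, 0 < k t)
    (hq0 : ∀ t, q t 0 = r (s t)) (hqm : ∀ t, q t (m t) = r (s t + k t))
    (hqw : ∀ t, IsWalkOn A (m t) (q t)) {t t' i i' : ℕ} (hlt : t < t')
    (hi : 0 < i) (him : i < m t) (hi' : 0 < i') (him' : i' < m t') :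
    q t i ≠ q t' i' := by
  intro heq
  have h1 : IsWalkOn A (m t - i) (fun x => q t (i + x)) := by
    intro x hx
    simpa [Nat.add_assoc] using hqw t (i + x) (by omega)
  have hgap2 : s t + k t ≤ s t' := s_mono hgap hk hlt
  have h2 : IsWalkOn A (s t' - (s t + k t)) (fun x => r (s t + k t + x)) := ray_walk hr _ _
  obtain ⟨w12, hw12, hw120, hw12e⟩ := h1.concat h2 (by
    show q t (i + (m t - i)) = r (s t + k t + 0)
    rw [show i + (m t - i) = m t by omega, hqm t, Nat.add_zero])
  have h3 : IsWalkOn A i' (q t') := fun x hx => hqw t' x (by omega)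
  obtain ⟨w, hw, hw0, hwe⟩ := hw12.concat h3 (by
    rw [hw12e]
    show r (s t + k t + (s t' - (s t + k t))) = q t' 0
    rw [hq0 t', show s t + k t + (s t' - (s t + k t)) = s t' by omega])
  refine noClosedWalk hacyc _ (by omega) w hw ?_
  rw [hwe, hw0, hw120]
  show q t' i' = q t (i + 0)
  rw [Nat.add_zero]
  exact heq.symm

lemma interior_disjoint (hacyc : DAcyclic A) (hr : IsRay A r)
    (hgap : ∀ t, s t + k t ≤ s (t + 1)) (hk : ∀ t, 0 < k t)
    (hq0 : ∀ t, q t 0 = r (s t)) (hqm : ∀ t, q t (m t) = r (s t + k t))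
    (hqw : ∀ t, IsWalkOn A (m t) (q t)) {t t' i i' : ℕ} (hne : t ≠ t')
    (hi : 0 < i) (him : i < m t) (hi' : 0 < i') (him' : i' < m t') :
    q t i ≠ q t' i' := by
  rcases Nat.lt_or_ge t t' with h | h
  · exact interior_disjoint_lt hacyc hr hgap hk hq0 hqm hqw h hi him hi' him'
  · intro heq
    exact interior_disjoint_lt hacyc hr hgap hk hq0 hqm hqw (show t' < t by omega)
      hi' him' hi him heq.symm

lemma mray_not_equiv (hacyc : DAcyclic A) (hr : IsRay A r)
    (hgap : ∀ t, s t + k t ≤ s (t + 1)) (hk : ∀ t, 0 < k t) (hm2 : ∀ t, 2 ≤ m t)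
    (hq0 : ∀ t, q t 0 = r (s t)) (hqm : ∀ t, q t (m t) = r (s t + k t))
    (hqw : ∀ t, IsWalkOn A (m t) (q t))
    (hoff : ∀ t i, 0 < i → i < m t → ∀ j, q t i ≠ r j)
    {T T' : ℕ → Prop} (hinf : {t | T t ∧ ¬ T' t}.Infinite) :
    ¬ RayEquiv (mray r q T s k m) (mray r q T' s k m) := by
  rintro ⟨M, N, hMN⟩
  have hpos' : ∀ t, ∃ i, T t → mray r q T s k m i = q t 1 := by
    intro t
    by_cases h : T t
    · obtain ⟨i, hi⟩ := mvisit hgap hk hm2 h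
      exact ⟨i, fun _ => hi⟩
    · exact ⟨0, fun h' => absurd h' h⟩
  choose pos hpos using hpos'
  have hinjD : Set.InjOn pos {t | T t ∧ ¬ T' t} := by
    intro t1 h1 t2 h2 he
    by_contra hne
    refine interior_disjoint hacyc hr hgap hk hq0 hqm hqw hne Nat.one_pos
      (by have := hm2 t1; omega) Nat.one_pos (by have := hm2 t2; omega) ?_
    refine (hpos t1 h1.1).symm.trans ?_
    rw [he]
    exact hpos t2 h2.1
  obtain ⟨b, hbmem, hbM⟩ := (hinf.image hinjD).exists_gt M
  obtain ⟨t, htD, rfl⟩ := hbmem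
  have hv := hpos t htD.1
  have hx := hMN (pos t - M)
  rw [show M + (pos t - M) = pos t by omega, hv] at hx
  rcases mray_range (T := T') (r := r) (q := q) (s := s) (k := k) hm2 (N + (pos t - M)) with
    ⟨j, hj⟩ | ⟨t'', i'', hT'', h0'', hm'', he⟩
  · exact hoff t 1 Nat.one_pos (by have := hm2 t; omega) j (hx.trans hj)
  · have hne : t ≠ t'' := fun h => htD.2 (h ▸ hT'')
    exact interior_disjoint hacyc hr hgap hk hq0 hqm hqw hne Nat.one_pos
      (by have := hm2 t; omega) h0'' hm'' (hx.trans he)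

end D2

lemma dvd_diff_infinite {a b : ℕ} (ha : 0 < a) (hb : 0 < b) (hnd : ¬ b ∣ a) :
    {t : ℕ | a ∣ t ∧ ¬ b ∣ t}.Infinite := by
  apply Set.infinite_of_injective_forall_mem (f := fun x : ℕ => a * (b * x + 1))
  · intro x y hxy
    simp only at hxy
    have h1 : b * x + 1 = b * y + 1 := Nat.eq_of_mul_eq_mul_left ha hxy
    exact Nat.eq_of_mul_eq_mul_left hb (by omega : b * x = b * y)
  · intro x
    refine ⟨⟨b * x + 1, rfl⟩, ?_⟩
    intro hd
    have h2 : b ∣ a * (b * x) := ⟨a * x, by ring⟩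
    have h3 := Nat.dvd_sub hd h2
    rw [show a * (b * x + 1) - a * (b * x) = a from by rw [Nat.mul_succ]; omega] at h3
    exact hnd h3

/-- The family of index sets used to build pairwise inequivalent rays. -/
def TnFam (ν t : ℕ) : Prop := (ν + 1) ∣ t

lemma TnFam_diff_infinite {a b : ℕ} (h : a < b) : {t | TnFam a t ∧ ¬ TnFam b t}.Infinite := by
  have hnd : ¬ (b + 1) ∣ (a + 1) := fun hd => by
    have := Nat.le_of_dvd (by omega) hd
    omega
  exact dvd_diff_infinite (by omega) (by omega) hnd

end Stmt2Final

end Stmt2Aux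

/-- If an acyclic digraph `D` has only finitely many equivalence
classes of rays, then `D` contains no multiray. -/
theorem stmt2 {V : Type*} (A : V → V → Prop) (hirr : Irreflexive A)
    (hacyc : DAcyclic A) (hfin : (RayClasses A).Finite) :
    ¬ ∃ r : ℕ → V, IsMultiray A r := by
  rintro ⟨r, hr, hby⟩
  classical
  have hcb := cleanBypass hacyc hr hby
  choose n k m q hNn hk0 hm2 hqw hq0 hqm hoff using hcb
  obtain ⟨S, K, Mm, Q, hgap, hK, hM2, hQw, hQ0, hQm, hQoff⟩ :
      ∃ (S K Mm : ℕ → ℕ) (Q : ℕ → ℕ → V),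
        (∀ t, S t + K t ≤ S (t + 1)) ∧ (∀ t, 0 < K t) ∧ (∀ t, 2 ≤ Mm t) ∧
        (∀ t, IsWalkOn A (Mm t) (Q t)) ∧ (∀ t, Q t 0 = r (S t)) ∧
        (∀ t, Q t (Mm t) = r (S t + K t)) ∧
        (∀ t i, 0 < i → i < Mm t → ∀ j, Q t i ≠ r j) := by
    let I : ℕ → ℕ := fun t => Nat.rec 0 (fun _ prev => n prev + k prev) t
    exact ⟨fun t => n (I t), fun t => k (I t), fun t => m (I t), fun t => q (I t),
      fun t => hNn (n (I t) + k (I t)), fun t => hk0 _, fun t => hm2 _, fun t => hqw _,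
      fun t => hq0 _, fun t => hqm _, fun t i => hoff _ i⟩
  have hray : ∀ ν : ℕ, IsRay A (mray r Q (TnFam ν) S K Mm) := fun ν =>
    mray_isRay hacyc hr hM2 hQ0 hQm hQw
  have key : ∀ a b : ℕ, a < b →
      ¬ RayEquiv (mray r Q (TnFam a) S K Mm) (mray r Q (TnFam b) S K Mm) := fun a b h =>
    mray_not_equiv hacyc hr hgap hK hM2 hQ0 hQm hQw hQoff (TnFam_diff_infinite h)
  have hinj : Function.Injective
      (fun ν => {u | IsRay A u ∧ RayEquiv (mray r Q (TnFam ν) S K Mm) u}) := by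
    intro a b hab
    by_contra hne
    simp only at hab
    have hRb : mray r Q (TnFam b) S K Mm ∈
        {u | IsRay A u ∧ RayEquiv (mray r Q (TnFam b) S K Mm) u} :=
      ⟨hray b, ⟨0, 0, fun i => rfl⟩⟩
    have hRa : mray r Q (TnFam a) S K Mm ∈
        {u | IsRay A u ∧ RayEquiv (mray r Q (TnFam a) S K Mm) u} :=
      ⟨hray a, ⟨0, 0, fun i => rfl⟩⟩
    rw [← hab] at hRb
    rw [hab] at hRa
    rcases Nat.lt_or_ge a b with h | h
    · exact key a b h hRb.2
    · exact key b a (by omega) hRa.2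
  have hmem : ∀ ν : ℕ,
      {u | IsRay A u ∧ RayEquiv (mray r Q (TnFam ν) S K Mm) u} ∈ RayClasses A := fun ν =>
    ⟨mray r Q (TnFam ν) S K Mm, hray ν, rfl⟩
  exact Set.infinite_of_injective_forall_mem hinj hmem hfin
end

section
/- Let P be a graded poset equipped with a Morse matching M′ such that the family R_{M′}(P) of equivalence classes of rays in H_{M′}(P) is finite. Then there exists a rayless Morse matching M on P such that C_M(P) = C_{M′}(P) ∪ {c_{[r]} : [r] ∈ R_{M′}(P)}, where the c_{[r]} are elements of P \ C_{M′}(P), c_{[r]} ≠ c_{[r′]} whenever [r] ≠ [r′], and deg(c_{[r]}) equals the degree of the ray r. -/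
section Digraph

variable {V : Type*} {A : V → V → Prop}

/-- A walk (not necessarily simple) of length `n`. -/
def WalkN (A : V → V → Prop) (n : ℕ) (p : ℕ → V) : Prop := ∀ i, i < n → A (p i) (p (i + 1))

lemma WalkN.splice {n : ℕ} {p : ℕ → V} (h : WalkN A n p) {i j : ℕ} (hij : i < j) (hjn : j ≤ n)
    (hpij : p i = p j) :
    ∃ q : ℕ → V, WalkN A (n - (j - i)) q ∧ q 0 = p 0 ∧ q (n - (j - i)) = p n ∧
      ∀ l, 0 < l → l < n - (j - i) → ∃ l', 0 < l' ∧ l' < n ∧ q l = p l' := by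
  refine ⟨fun k => if k ≤ i then p k else p (k + (j - i)), ?_, ?_, ?_, ?_⟩
  · intro k hk
    show A (if k ≤ i then p k else p (k + (j - i)))
      (if k + 1 ≤ i then p (k + 1) else p (k + 1 + (j - i)))
    by_cases h1 : k + 1 ≤ i
    · rw [if_pos h1, if_pos (by omega : k ≤ i)]
      exact h k (by omega)
    by_cases h2 : k ≤ i
    · have hki : k = i := by omega
      rw [if_pos h2, if_neg h1, hki, hpij, show i + 1 + (j - i) = j + 1 by omega]
      exact h j (by omega)
    · rw [if_neg h2, if_neg h1, show k + 1 + (j - i) = k + (j - i) + 1 by omega]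
      exact h (k + (j - i)) (by omega)
  · show (if (0:ℕ) ≤ i then p 0 else p (0 + (j - i))) = p 0
    rw [if_pos (Nat.zero_le i)]
  · show (if n - (j - i) ≤ i then p (n - (j - i)) else p (n - (j - i) + (j - i))) = p n
    by_cases h3 : n - (j - i) ≤ i
    · rw [if_pos h3, show n - (j - i) = i by omega, hpij, show j = n by omega]
    · rw [if_neg h3, show n - (j - i) + (j - i) = n by omega]
  · intro l h1 h2
    by_cases hc : l ≤ i
    · exact ⟨l, h1, by omega, by simp [hc]⟩
    · exact ⟨l + (j - i), by omega, by omega, by simp [hc]⟩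

lemma no_closed_walkN (hA : DAcyclic A) :
    ∀ n, ∀ p : ℕ → V, WalkN A n p → p 0 = p n → 0 < n → False := by
  intro n
  induction n using Nat.strong_induction_on with
  | _ n IH =>
    intro p hw h0 hn
    by_cases hinj : ∀ i j, i ≤ n - 1 → j ≤ n - 1 → p i = p j → i = j
    · refine hA ⟨n - 1, p, ⟨hinj, fun i hi => hw i (by omega)⟩, ?_⟩
      have := hw (n - 1) (by omega)
      rw [show n - 1 + 1 = n by omega, ← h0] at this
      exact this
    · push_neg at hinj
      obtain ⟨i, j, hi, hj, hpij, hne⟩ := hinj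
      rcases Nat.lt_or_ge i j with hlt | hge
      · obtain ⟨q, hw', h0', hend', -⟩ := hw.splice hlt (by omega) hpij
        exact IH (n - (j - i)) (by omega) q hw' (by rw [h0', hend', h0]) (by omega)
      · have hlt : j < i := by omega
        obtain ⟨q, hw', h0', hend', -⟩ := hw.splice hlt (by omega) hpij.symm
        exact IH (n - (i - j)) (by omega) q hw' (by rw [h0', hend', h0]) (by omega)

/-- Extract a simple path from a walk, with interior vertices among the walk's
interior vertices. -/
lemma walk_to_path : ∀ n, ∀ p : ℕ → V, WalkN A n p → 0 < n → p 0 ≠ p n →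
    ∃ m q, IsPathOn A m q ∧ 0 < m ∧ q 0 = p 0 ∧ q m = p n ∧
      ∀ l, 0 < l → l < m → ∃ l', 0 < l' ∧ l' < n ∧ q l = p l' := by
  intro n
  induction n using Nat.strong_induction_on with
  | _ n IH =>
    intro p hw hn hne
    by_cases hinj : ∀ i j, i ≤ n → j ≤ n → p i = p j → i = j
    · exact ⟨n, p, ⟨hinj, fun i hi => hw i hi⟩, hn, rfl, rfl,
        fun l h1 h2 => ⟨l, h1, h2, rfl⟩⟩
    · push_neg at hinj
      obtain ⟨i0, j0, hi0, hj0, hpij0, hne0⟩ := hinj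
      have key : ∀ i j, i < j → j ≤ n → p i = p j →
          ∃ m q, IsPathOn A m q ∧ 0 < m ∧ q 0 = p 0 ∧ q m = p n ∧
            ∀ l, 0 < l → l < m → ∃ l', 0 < l' ∧ l' < n ∧ q l = p l' := by
        intro i j hlt hjn hpij
        obtain ⟨q, hw', h0', hend', hintq⟩ := hw.splice hlt hjn hpij
        have hij0n : ¬ (i = 0 ∧ j = n) := by
          rintro ⟨rfl, rfl⟩; exact hne hpij
        have hpos : 0 < n - (j - i) := by omega
        obtain ⟨m, q', hq, hm, hq0, hqm, hint⟩ := IH (n - (j - i)) (by omega) q hw' hpos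
          (by rw [h0', hend']; exact hne)
        refine ⟨m, q', hq, hm, by rw [hq0, h0'], by rw [hqm, hend'], ?_⟩
        intro l h1 h2
        obtain ⟨l', h1', h2', hql⟩ := hint l h1 h2
        obtain ⟨l'', h1'', h2'', hql''⟩ := hintq l' h1' h2'
        exact ⟨l'', h1'', h2'', by rw [hql, hql'']⟩
      rcases Nat.lt_or_ge i0 j0 with hlt | hge
      · exact key i0 j0 hlt hj0 hpij0
      · exact key j0 i0 (by omega) hi0 hpij0.symm

lemma walkN_of_ray {r : ℕ → V} (hr : ∀ i, A (r i) (r (i+1))) (a b : ℕ) :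
    WalkN A (b - a) (fun i => r (a + i)) := by
  intro i hi
  show A (r (a + i)) (r (a + (i + 1)))
  rw [show a + (i + 1) = (a + i) + 1 by omega]
  exact hr (a + i)

/-- Existence of a positive-length walk. -/
def HasWalk (A : V → V → Prop) (x y : V) : Prop :=
  ∃ n p, 0 < n ∧ WalkN A n p ∧ p 0 = x ∧ p n = y

lemma WalkN.hasWalk {n : ℕ} {p : ℕ → V} (h : WalkN A n p) (hn : 0 < n) :
    HasWalk A (p 0) (p n) := ⟨n, p, hn, h, rfl, rfl⟩

lemma HasWalk.trans {x y z : V} (h1 : HasWalk A x y) (h2 : HasWalk A y z) : HasWalk A x z := by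
  obtain ⟨n, p, hn, hp, hp0, hpn⟩ := h1
  obtain ⟨m, q, hm, hq, hq0, hqm⟩ := h2
  refine ⟨n + m, fun i => if i < n then p i else q (i - n), by omega, ?_, ?_, ?_⟩
  · intro i hi
    show A (if i < n then p i else q (i - n)) (if i + 1 < n then p (i + 1) else q (i + 1 - n))
    by_cases h1 : i + 1 < n
    · rw [if_pos h1, if_pos (by omega : i < n)]
      exact hp i (by omega)
    by_cases h2 : i < n
    · rw [if_pos h2, if_neg h1, show i + 1 - n = 0 by omega, hq0, ← hpn,
        show n = i + 1 by omega]
      exact hp i (by omega)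
    · rw [if_neg h2, if_neg h1, show i + 1 - n = (i - n) + 1 by omega]
      exact hq _ (by omega)
  · show (if 0 < n then p 0 else q (0 - n)) = x
    rw [if_pos hn, hp0]
  · show (if n + m < n then p (n + m) else q (n + m - n)) = z
    rw [if_neg (by omega), show n + m - n = m by omega, hqm]

lemma HasWalk.single {x y : V} (h : A x y) : HasWalk A x y :=
  ⟨1, fun i => if i = 0 then x else y, one_pos, fun i hi => by
    have : i = 0 := by omega
    subst this
    show A (if (0:ℕ) = 0 then x else y) (if (0:ℕ) + 1 = 0 then x else y)
    simpa using h, by simp, by simp⟩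

lemma not_hasWalk_self (hA : DAcyclic A) (x : V) : ¬ HasWalk A x x := by
  rintro ⟨n, p, hn, hp, h0, hend⟩
  exact no_closed_walkN hA n p hp (by rw [h0, hend]) hn

lemma hasWalk_of_ray {r : ℕ → V} (hr : ∀ i, A (r i) (r (i+1))) {a b : ℕ} (hab : a < b) :
    HasWalk A (r a) (r b) := by
  refine ⟨b - a, fun i => r (a + i), by omega, walkN_of_ray hr a b, by simp, ?_⟩
  show r (a + (b - a)) = r b
  rw [show a + (b - a) = b by omega]

end Digraph

section RayEquivLemmas

variable {V : Type*} {A : V → V → Prop}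

lemma rayEquiv_refl (r : ℕ → V) : RayEquiv r r := ⟨0, 0, fun _ => rfl⟩

lemma RayEquiv.symm {r s : ℕ → V} (h : RayEquiv r s) : RayEquiv s r := by
  obtain ⟨M, N, h⟩ := h; exact ⟨N, M, fun i => (h i).symm⟩

lemma RayEquiv.trans {r s t : ℕ → V} (h1 : RayEquiv r s) (h2 : RayEquiv s t) : RayEquiv r t := by
  obtain ⟨M, N, h1⟩ := h1
  obtain ⟨N', K, h2⟩ := h2
  refine ⟨M + (max N N' - N), K + (max N N' - N'), fun i => ?_⟩
  have e1 := h1 ((max N N' - N) + i)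
  have e2 := h2 ((max N N' - N') + i)
  rw [show M + (max N N' - N) + i = M + (max N N' - N + i) by omega, e1,
    show N + (max N N' - N + i) = N' + (max N N' - N' + i) by omega, e2,
    show K + (max N N' - N') + i = K + (max N N' - N' + i) by omega]

lemma rayEquiv_shift (r : ℕ → V) (T : ℕ) : RayEquiv r (fun i => r (T + i)) :=
  ⟨T, 0, fun i => by simp⟩

lemma IsRay.shift {r : ℕ → V} (h : IsRay A r) (T : ℕ) : IsRay A (fun i => r (T + i)) := by
  refine ⟨fun i j hij => ?_, fun i => ?_⟩
  · simp only at hij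
    have := h.1 hij; omega
  · show A (r (T + i)) (r (T + (i + 1)))
    rw [show T + (i + 1) = (T + i) + 1 by omega]
    exact h.2 (T + i)

lemma RayEquiv.diff_finite {r s : ℕ → V} (h : RayEquiv r s) :
    (Set.range r \ Set.range s).Finite := by
  obtain ⟨M, N, h⟩ := h
  apply Set.Finite.subset ((Set.finite_Iio M).image r)
  rintro x ⟨⟨n, rfl⟩, hns⟩
  by_cases hn : n < M
  · exact ⟨n, hn, rfl⟩
  · exfalso
    refine hns ⟨N + (n - M), ?_⟩
    rw [← h (n - M)]
    congr 1
    omega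

def classOf (A : V → V → Prop) (r : ℕ → V) : Set (ℕ → V) := {s | IsRay A s ∧ RayEquiv r s}

lemma classOf_mem_rayClasses {r : ℕ → V} (h : IsRay A r) : classOf A r ∈ RayClasses A :=
  ⟨r, h, rfl⟩

lemma mem_classOf_self {r : ℕ → V} (h : IsRay A r) : r ∈ classOf A r := ⟨h, rayEquiv_refl r⟩

lemma classOf_eq {r s : ℕ → V} (hs : IsRay A s) (h : RayEquiv r s) :
    classOf A r = classOf A s := by
  ext u
  constructor
  · rintro ⟨hu, h2⟩; exact ⟨hu, h.symm.trans h2⟩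
  · rintro ⟨hu, h2⟩; exact ⟨hu, h.trans h2⟩

lemma rayClasses_elim {K : Set (ℕ → V)} (hK : K ∈ RayClasses A) :
    ∃ r, IsRay A r ∧ K = classOf A r := hK

end RayEquivLemmas

section Grading

variable {P : Type*} [PartialOrder P]

lemma exists_maxChainIn (x : P) : ∃ C : Set P, IsMaxChainIn x C ∧ x ∈ C := by
  have hchain : IsChain (· ≤ ·) ({⟨x, le_refl x⟩} : Set (Set.Iic x)) :=
    Set.Subsingleton.isChain (Set.subsingleton_singleton)
  obtain ⟨t, ht, hsub⟩ := hchain.exists_maxChain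
  refine ⟨Subtype.val '' t, ⟨⟨?_, ?_⟩, ?_⟩, ?_⟩
  · rintro _ ⟨z, hz, rfl⟩; exact z.2
  · exact ht.1.image_of_map_rel (· ≤ ·) (· ≤ ·) Subtype.val (fun _ _ h => h)
  · intro D hD hCD
    have htD : t ⊆ {z : Set.Iic x | z.val ∈ D} := fun z hz => hCD ⟨z, hz, rfl⟩
    have hDchain : IsChain (· ≤ ·) {z : Set.Iic x | z.val ∈ D} := by
      intro a ha b hb hab
      have := hD.2 ha hb (fun h => hab (Subtype.ext h))
      rcases this with h | h
      · exact Or.inl h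
      · exact Or.inr h
    have := ht.2 hDchain htD
    apply Set.Subset.antisymm hCD
    intro d hd
    have : (⟨d, hD.1 hd⟩ : Set.Iic x) ∈ t := by rw [this]; exact hd
    exact ⟨_, this, rfl⟩
  · exact ⟨⟨x, le_refl x⟩, hsub rfl, rfl⟩

lemma covBy_deg {deg : P → ℕ} (hg : GradedDeg deg) {x y : P} (h : x ⋖ y) :
    deg y = deg x + 1 := by
  obtain ⟨C, hC, hxC⟩ := exists_maxChainIn x
  have hyC : y ∉ C := fun hy => absurd (hC.1.1 hy) (not_le_of_gt h.lt)
  have hins : IsMaxChainIn y (insert y C) := by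
    refine ⟨⟨?_, ?_⟩, ?_⟩
    · rintro z (rfl | hz)
      · exact le_refl _
      · exact le_trans (hC.1.1 hz) (le_of_lt h.lt)
    · refine hC.1.2.insert (fun b hb _ => ?_)
      exact Or.inr (le_trans (hC.1.1 hb) (le_of_lt h.lt))
    · intro D hD hCD
      refine Set.Subset.antisymm hCD (fun z hz => ?_)
      have hzy : z ≤ y := hD.1 hz
      rcases eq_or_lt_of_le hzy with rfl | hzy'
      · exact Set.mem_insert _ _
      · have hzx : z ≤ x := by
          have hcomp := hD.2 hz (hCD (Set.mem_insert_of_mem _ hxC))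
          rcases eq_or_ne z x with rfl | hne
          · exact le_refl _
          · rcases hcomp hne with hzx | hxz
            · exact hzx
            · exact absurd hzy' (h.2 (lt_of_le_of_ne hxz (Ne.symm hne)))
        have : C = insert z C := by
          refine hC.2 (insert z C) ⟨?_, ?_⟩ (Set.subset_insert _ _)
          · rintro w (rfl | hw)
            · exact hzx
            · exact hC.1.1 hw
          · refine hC.1.2.insert (fun b hb hbz => ?_)
            exact hD.2 hz (hCD (Set.mem_insert_of_mem _ hb)) hbz
        exact Set.mem_insert_of_mem _ (by rw [this]; exact Set.mem_insert _ _)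
  have h1 := hg x C hC
  have h2 := hg y (insert y C) hins
  have := Set.ncard_insert_of_notMem hyC h1.1
  omega

end Grading

section MatchingFacts

variable {P : Type*} [PartialOrder P] {M : Set (P × P)} {deg : P → ℕ}

lemma matched_eq (hm : IsMatching M) {e f : P × P} (he : e ∈ M) (hf : f ∈ M)
    (h : e.1 = f.1 ∨ e.1 = f.2 ∨ e.2 = f.1 ∨ e.2 = f.2) : e = f := by
  by_contra hne
  have := hm.2 e he f hf hne
  tauto

lemma no_two_up (hm : IsMatching M) {x y z : P} (h1 : (y, x) ∈ M) (h2 : (z, y) ∈ M) : False := by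
  have := matched_eq hm h1 h2 (by simp)
  have hyx : y = z ∧ x = y := by
    constructor <;> [exact congrArg Prod.fst this; exact congrArg Prod.snd this]
  obtain ⟨rfl, rfl⟩ := hyx
  exact lt_irrefl _ (hm.1 _ h1).lt

/-- Classification of arrows in `HasseM M`: down (cover, unmatched) or up (matched). -/
lemma hasseM_classify (hm : IsMatching M) (hg : GradedDeg deg) {x y : P}
    (h : HasseM M x y) :
    (y ⋖ x ∧ (x, y) ∉ M ∧ deg x = deg y + 1) ∨ ((y, x) ∈ M ∧ x ⋖ y ∧ deg y = deg x + 1) := by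
  rcases h with ⟨hc, hnm⟩ | hmem
  · exact Or.inl ⟨hc, hnm, covBy_deg hg hc⟩
  · exact Or.inr ⟨hmem, hm.1 _ hmem, covBy_deg hg (hm.1 _ hmem)⟩

lemma hasseM_irrefl (hm : IsMatching M) (x : P) : ¬ HasseM M x x := by
  rintro (⟨hc, -⟩ | hmem)
  · exact lt_irrefl _ hc.lt
  · exact lt_irrefl _ (hm.1 _ hmem).lt

/-- Along a ray in `HasseM M`, degrees drop at least every two steps. -/
lemma ray_step_pair (hm : IsMatching M) (hg : GradedDeg deg) {s : ℕ → P}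
    (hs : ∀ i, HasseM M (s i) (s (i + 1))) (i : ℕ) :
    deg (s (i + 2)) ≤ deg (s i) := by
  rcases hasseM_classify hm hg (hs i) with ⟨-, -, h1⟩ | ⟨hup1, -, h1⟩
  · rcases hasseM_classify hm hg (hs (i+1)) with ⟨-, -, h2⟩ | ⟨-, -, h2⟩ <;>
      rw [show i + 1 + 1 = i + 2 by omega] at h2 <;> omega
  · rcases hasseM_classify hm hg (hs (i+1)) with ⟨-, -, h2⟩ | ⟨hup2, -, h2⟩
    · rw [show i + 1 + 1 = i + 2 by omega] at h2
      omega
    · exact absurd (no_two_up hm hup1 hup2) (fun h => h)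

lemma nonincr_ev_const {f : ℕ → ℕ} (h : ∀ n, f (n + 1) ≤ f n) :
    ∃ N, ∀ n, N ≤ n → f n = f N := by
  have hmono : ∀ a b, a ≤ b → f b ≤ f a := by
    intro a b hab
    induction b with
    | zero => simp_all
    | succ b IH =>
      rcases Nat.lt_or_ge a (b + 1) with h1 | h1
      · exact le_trans (h b) (IH (by omega))
      · rw [show a = b + 1 by omega]
  obtain ⟨N, hN⟩ : ∃ N, f N = sInf (Set.range f) := by
    obtain ⟨N, hN⟩ := Nat.sInf_mem (Set.range_nonempty f)
    exact ⟨N, hN⟩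
  refine ⟨N, fun n hn => le_antisymm (hmono N n hn) ?_⟩
  rw [hN]
  exact Nat.sInf_le ⟨n, rfl⟩

end MatchingFacts

section RayStructure

variable {P : Type*} [PartialOrder P] {M : Set (P × P)} {deg : P → ℕ}

lemma nonincr_mono {f : ℕ → ℕ} (h : ∀ n, f (n + 1) ≤ f n) :
    ∀ a b, a ≤ b → f b ≤ f a := by
  intro a b hab
  induction b with
  | zero => simp_all
  | succ b IH =>
    rcases Nat.lt_or_ge a (b + 1) with h1 | h1
    · exact le_trans (h b) (IH (by omega))
    · rw [show a = b + 1 by omega]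

/-- The degree-alternating tail of a ray in `HasseM M`. -/
lemma ray_tail_structure (hm : IsMatching M) (hg : GradedDeg deg) {s : ℕ → P}
    (hs : IsRay (HasseM M) s) :
    ∃ T, (∀ k, (s (T + (2*k+1)), s (T + 2*k)) ∈ M) ∧
      (∀ k, s (T + (2*k+2)) ⋖ s (T + (2*k+1)) ∧ (s (T + (2*k+1)), s (T + (2*k+2))) ∉ M) ∧
      (∀ k, deg (s (T + 2*k)) = deg (s T)) ∧
      (∀ k, deg (s (T + (2*k+1))) = deg (s T) + 1) ∧
      (∀ j, deg (s T) ≤ deg (s j)) := by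
  have hestep0 : ∀ k, (fun k => deg (s (2*k))) (k+1) ≤ (fun k => deg (s (2*k))) k := by
    intro k
    have := ray_step_pair hm hg hs.2 (2*k)
    simpa [show 2*(k+1) = 2*k + 2 by omega] using this
  have hostep0 : ∀ k, (fun k => deg (s (2*k+1))) (k+1) ≤ (fun k => deg (s (2*k+1))) k := by
    intro k
    have := ray_step_pair hm hg hs.2 (2*k+1)
    simpa [show 2*(k+1)+1 = 2*k+1 + 2 by omega] using this
  obtain ⟨Ne, hNe0⟩ := nonincr_ev_const (f := fun k => deg (s (2*k))) hestep0
  obtain ⟨No, hNo0⟩ := nonincr_ev_const (f := fun k => deg (s (2*k+1))) hostep0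
  have hNe : ∀ n, Ne ≤ n → deg (s (2*n)) = deg (s (2*Ne)) := hNe0
  have hNo : ∀ n, No ≤ n → deg (s (2*n+1)) = deg (s (2*No+1)) := hNo0
  set K := max Ne No with hK
  have heK : ∀ k, K ≤ k → deg (s (2*k)) = deg (s (2*K)) := by
    intro k hk
    rw [hNe k (by omega), hNe K (by omega)]
  have hoK : ∀ k, K ≤ k → deg (s (2*k+1)) = deg (s (2*K+1)) := by
    intro k hk
    rw [hNo k (by omega), hNo K (by omega)]
  have helb : ∀ k, deg (s (2*K)) ≤ deg (s (2*k)) := by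
    intro k
    rcases Nat.lt_or_ge k K with h1 | h1
    · have : (fun k => deg (s (2*k))) K ≤ (fun k => deg (s (2*k))) k :=
        nonincr_mono (f := fun k => deg (s (2*k))) hestep0 k K (by omega)
      exact this
    · rw [heK k h1]
  have holb : ∀ k, deg (s (2*K+1)) ≤ deg (s (2*k+1)) := by
    intro k
    rcases Nat.lt_or_ge k K with h1 | h1
    · have : (fun k => deg (s (2*k+1))) K ≤ (fun k => deg (s (2*k+1))) k :=
        nonincr_mono (f := fun k => deg (s (2*k+1))) hostep0 k K (by omega)
      exact this
    · rw [hoK k h1]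
  have hstep0 := hasseM_classify hm hg (hs.2 (2*K))
  have main : ∀ T d, (∀ k, deg (s (T + 2*k)) = d) → (∀ k, deg (s (T + (2*k+1))) = d + 1) →
      (∀ j, d ≤ deg (s j)) →
      (∀ k, (s (T + (2*k+1)), s (T + 2*k)) ∈ M) ∧
      (∀ k, s (T + (2*k+2)) ⋖ s (T + (2*k+1)) ∧ (s (T + (2*k+1)), s (T + (2*k+2))) ∉ M) ∧
      (∀ k, deg (s (T + 2*k)) = deg (s T)) ∧
      (∀ k, deg (s (T + (2*k+1))) = deg (s T) + 1) ∧
      (∀ j, deg (s T) ≤ deg (s j)) := by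
    intro T d hlow hhigh hlb
    have hdT : deg (s T) = d := by simpa using hlow 0
    have hup : ∀ k, (s (T + (2*k+1)), s (T + 2*k)) ∈ M := by
      intro k
      rcases hasseM_classify hm hg (hs.2 (T + 2*k)) with ⟨-, -, hdown⟩ | ⟨hmem, -, -⟩
      · rw [show T + 2*k + 1 = T + (2*k+1) by omega] at hdown
        rw [hlow k, hhigh k] at hdown
        omega
      · rw [show T + 2*k + 1 = T + (2*k+1) by omega] at hmem
        exact hmem
    have hdn : ∀ k, s (T + (2*k+2)) ⋖ s (T + (2*k+1)) ∧ (s (T + (2*k+1)), s (T + (2*k+2))) ∉ M := by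
      intro k
      rcases hasseM_classify hm hg (hs.2 (T + (2*k+1))) with ⟨hc, hnm, -⟩ | ⟨-, -, hupdeg⟩
      · rw [show T + (2*k+1) + 1 = T + (2*k+2) by omega] at hc hnm
        exact ⟨hc, hnm⟩
      · rw [show T + (2*k+1) + 1 = T + (2*(k+1)) by omega] at hupdeg
        rw [hlow (k+1), hhigh k] at hupdeg
        omega
    refine ⟨hup, hdn, ?_, ?_, ?_⟩
    · intro k; rw [hlow k, hdT]
    · intro k; rw [hhigh k, hdT]
    · intro j; rw [hdT]; exact hlb j
  rcases hstep0 with ⟨-, -, hd⟩ | ⟨-, -, hd⟩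
  · -- down step at 2K : odd level is lower: start at 2K+1
    refine ⟨2*K + 1, main (2*K+1) (deg (s (2*K+1))) ?_ ?_ ?_⟩
    · intro k
      rw [show 2*K+1+2*k = 2*(K+k)+1 by omega]
      exact hoK (K+k) (by omega)
    · intro k
      rw [show 2*K+1+(2*k+1) = 2*(K+k+1) by omega]
      have h1 := heK (K+k+1) (by omega)
      omega
    · intro j
      rcases Nat.even_or_odd j with ⟨c, hc⟩ | ⟨c, hc⟩
      · have h1 := helb c
        rw [show j = 2*c by omega]
        omega
      · have h1 := holb c
        rw [show j = 2*c+1 by omega]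
        omega
  · -- up step at 2K : even level is lower: start at 2K
    refine ⟨2*K, main (2*K) (deg (s (2*K))) ?_ ?_ ?_⟩
    · intro k
      rw [show 2*K+2*k = 2*(K+k) by omega]
      exact heK (K+k) (by omega)
    · intro k
      rw [show 2*K+(2*k+1) = 2*(K+k)+1 by omega]
      have h1 := hoK (K+k) (by omega)
      rw [show 2*K+1 = 2*K+1 by omega] at hd
      omega
    · intro j
      rcases Nat.even_or_odd j with ⟨c, hc⟩ | ⟨c, hc⟩
      · have h1 := helb c
        rw [show j = 2*c by omega]
        exact h1
      · have h1 := holb c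
        rw [show j = 2*c+1 by omega]
        omega

lemma rayDeg_eq_of {s : ℕ → P} {d : ℕ} (hmem : ∃ j, deg (s j) = d)
    (hlb : ∀ j, d ≤ deg (s j)) : rayDeg deg s = d := by
  have h1 : sInf {i | ∃ j, deg (s j) = i} ≤ d := Nat.sInf_le hmem
  have h2 := Nat.sInf_mem (⟨d, hmem⟩ : Set.Nonempty {i | ∃ j : ℕ, deg (s j) = i})
  obtain ⟨j, hj⟩ := h2
  have := hlb j
  unfold rayDeg
  omega

/-- `rayDeg` is attained arbitrarily far along the ray, and is a lower bound. -/
lemma rayDeg_spec (hm : IsMatching M) (hg : GradedDeg deg) {s : ℕ → P}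
    (hs : IsRay (HasseM M) s) :
    (∀ j, rayDeg deg s ≤ deg (s j)) ∧ ∀ J, ∃ j, J ≤ j ∧ deg (s j) = rayDeg deg s := by
  obtain ⟨T, -, -, hlow, -, hlb⟩ := ray_tail_structure hm hg hs
  have hrd : rayDeg deg s = deg (s T) := rayDeg_eq_of ⟨T, rfl⟩ hlb
  refine ⟨fun j => by rw [hrd]; exact hlb j, fun J => ?_⟩
  refine ⟨T + 2*J, by omega, by rw [hlow J, hrd]⟩

lemma rayDeg_inv (hm : IsMatching M) (hg : GradedDeg deg) {r s : ℕ → P}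
    (hr : IsRay (HasseM M) r) (hs : IsRay (HasseM M) s) (h : RayEquiv r s) :
    rayDeg deg r = rayDeg deg s := by
  have key : ∀ r s : ℕ → P, IsRay (HasseM M) r → IsRay (HasseM M) s → RayEquiv r s →
      rayDeg deg r ≤ rayDeg deg s := by
    intro r s hr hs ⟨M0, N0, heq⟩
    obtain ⟨hlb_r, -⟩ := rayDeg_spec hm hg hr
    obtain ⟨-, hatt_s⟩ := rayDeg_spec hm hg hs
    obtain ⟨j, hj1, hj2⟩ := hatt_s N0
    have := heq (j - N0)
    rw [show N0 + (j - N0) = j by omega] at this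
    rw [← hj2, ← this]
    exact hlb_r _
  exact le_antisymm (key r s hr hs h) (key s r hs hr h.symm)

end RayStructure
section SkipSection

variable {V : Type*}

structure SkipDat (A : V → V → Prop) (τ : ℕ → V) where
  i : ℕ
  j : ℕ
  m : ℕ
  p : ℕ → V
  hij : i < j
  hpath : IsPathOn A m p
  hp0 : p 0 = τ i
  hpm : p m = τ j
  hint : ∀ l, 0 < l → l < m → ∀ k, p l ≠ τ k
  hside : 2 ≤ m ∨ i + 1 < j

variable {A : V → V → Prop} {τ : ℕ → V}

def eIdx (σ : ℕ → SkipDat A τ) : ℕ → ℕ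
  | 0 => 0
  | t + 1 => (σ t).j

def ramp (σ : ℕ → SkipDat A τ) (t : ℕ) : ℕ := (σ t).i - eIdx σ t

def blen (S : ℕ → Bool) (σ : ℕ → SkipDat A τ) (t : ℕ) : ℕ :=
  if S t then ramp σ t + (σ t).m else (σ t).j - eIdx σ t

def ofs (S : ℕ → Bool) (σ : ℕ → SkipDat A τ) : ℕ → ℕ
  | 0 => 0
  | t + 1 => ofs S σ t + blen S σ t

def Tof (S : ℕ → Bool) (σ : ℕ → SkipDat A τ) (n : ℕ) : ℕ :=
  Nat.findGreatest (fun t => ofs S σ t ≤ n) n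

def blockv (S : ℕ → Bool) (σ : ℕ → SkipDat A τ) (t l : ℕ) : V :=
  if S t = true ∧ ramp σ t < l then (σ t).p (l - ramp σ t) else τ (eIdx σ t + l)

def uRay (S : ℕ → Bool) (σ : ℕ → SkipDat A τ) (n : ℕ) : V :=
  blockv S σ (Tof S σ n) (n - ofs S σ (Tof S σ n))

/-- The chosen skips are strictly ordered along the ray. -/
def GoodSig (σ : ℕ → SkipDat A τ) : Prop :=
  1 ≤ (σ 0).i ∧ ∀ t, (σ t).j + 1 ≤ (σ (t + 1)).i

variable {σ : ℕ → SkipDat A τ} {S S' : ℕ → Bool}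

lemma m_pos (hτ : Function.Injective τ) (t : ℕ) : 1 ≤ (σ t).m := by
  by_contra h
  have hm : (σ t).m = 0 := by omega
  have := (σ t).hp0
  rw [← hm] at this
  rw [(σ t).hpm] at this
  exact absurd (hτ this) (by have := (σ t).hij; omega)

lemma eIdx_lt_i (hσ : GoodSig σ) (t : ℕ) : eIdx σ t < (σ t).i := by
  cases t with
  | zero => exact hσ.1
  | succ t => have := hσ.2 t; simp only [eIdx]; omega

lemma eIdx_succ (t : ℕ) : eIdx σ (t + 1) = (σ t).j := rfl

lemma eIdx_strict (hσ : GoodSig σ) (t : ℕ) : eIdx σ t < eIdx σ (t + 1) := by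
  have h1 := eIdx_lt_i hσ t
  have h2 := (σ t).hij
  rw [eIdx_succ]
  omega

lemma eIdx_mono (hσ : GoodSig σ) {a b : ℕ} (h : a ≤ b) : eIdx σ a ≤ eIdx σ b := by
  induction b with
  | zero => simp_all
  | succ b IH =>
    rcases Nat.lt_or_ge a (b + 1) with h1 | h1
    · exact le_trans (IH (by omega)) (le_of_lt (eIdx_strict hσ b))
    · rw [show a = b + 1 by omega]

lemma j_lt_i (hσ : GoodSig σ) {t t' : ℕ} (h : t < t') : (σ t).j < (σ t').i := by
  have h1 : eIdx σ (t + 1) ≤ eIdx σ t' := eIdx_mono hσ h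
  have h2 := eIdx_lt_i hσ t'
  rw [eIdx_succ] at h1
  omega

lemma i_strictmono (hσ : GoodSig σ) {t t' : ℕ} (h : t < t') : (σ t).i < (σ t').i :=
  lt_trans (σ t).hij (j_lt_i hσ h)

lemma blen_pos (hτ : Function.Injective τ) (hσ : GoodSig σ) (t : ℕ) : 1 ≤ blen S σ t := by
  unfold blen
  have h1 := eIdx_lt_i hσ t
  have h2 := (σ t).hij
  have h3 := m_pos (σ := σ) hτ t
  split <;> omega

lemma ofs_succ (t : ℕ) : ofs S σ (t + 1) = ofs S σ t + blen S σ t := rfl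

lemma ofs_mono (hτ : Function.Injective τ) (hσ : GoodSig σ) {a b : ℕ} (h : a ≤ b) :
    ofs S σ a ≤ ofs S σ b := by
  induction b with
  | zero => simp_all
  | succ b IH =>
    rcases Nat.lt_or_ge a (b + 1) with h1 | h1
    · have := blen_pos (S := S) (σ := σ) hτ hσ b
      rw [ofs_succ]
      have := IH (by omega)
      omega
    · rw [show a = b + 1 by omega]

lemma ofs_ge (hτ : Function.Injective τ) (hσ : GoodSig σ) (t : ℕ) : t ≤ ofs S σ t := by
  induction t with
  | zero => simp [ofs]
  | succ t IH =>
    have := blen_pos (S := S) (σ := σ) hτ hσ t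
    rw [ofs_succ]
    omega

lemma tof_spec (hτ : Function.Injective τ) (hσ : GoodSig σ) (n : ℕ) :
    ofs S σ (Tof S σ n) ≤ n ∧ n < ofs S σ (Tof S σ n + 1) := by
  constructor
  · exact Nat.findGreatest_spec (P := fun t => ofs S σ t ≤ n) (Nat.zero_le n)
      (show ofs S σ 0 ≤ n from Nat.zero_le n)
  · by_contra h
    push_neg at h
    have h1 : Tof S σ n + 1 ≤ n := le_trans (ofs_ge hτ hσ _) h
    have h2 : Tof S σ n + 1 ≤ Tof S σ n :=
      Nat.le_findGreatest (P := fun t => ofs S σ t ≤ n) h1 h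
    omega

lemma tof_eq (hτ : Function.Injective τ) (hσ : GoodSig σ) {t n : ℕ}
    (h1 : ofs S σ t ≤ n) (h2 : n < ofs S σ (t + 1)) : Tof S σ n = t := by
  have hs := tof_spec (S := S) hτ hσ (σ := σ) n
  have hge : t ≤ Tof S σ n :=
    Nat.le_findGreatest (le_trans (ofs_ge hτ hσ t) h1) h1
  rcases Nat.lt_or_ge (Tof S σ n) (t + 1) with hlt | hge'
  · omega
  · have := ofs_mono (S := S) hτ hσ hge'
    omega

/-- Interior vertices of distinct skips are distinct. -/
lemma interiors_disj (hτ : ∀ i, A (τ i) (τ (i+1))) (hinj : Function.Injective τ)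
    (hA : DAcyclic A) (hσ : GoodSig σ) {t t' : ℕ} (h : t < t') {a b : ℕ}
    (ha : 0 < a) (ham : a < (σ t).m) (hb : 0 < b) (hbm : b < (σ t').m) :
    (σ t).p a ≠ (σ t').p b := by
  intro heq
  have w1 : HasWalk A ((σ t).p a) (τ ((σ t).j)) := by
    refine ⟨(σ t).m - a, fun x => (σ t).p (a + x), by omega, ?_, by simp, ?_⟩
    · intro x hx
      show A ((σ t).p (a + x)) ((σ t).p (a + (x + 1)))
      rw [show a + (x + 1) = (a + x) + 1 by omega]
      exact (σ t).hpath.2 (a + x) (by omega)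
    · show (σ t).p (a + ((σ t).m - a)) = τ ((σ t).j)
      rw [show a + ((σ t).m - a) = (σ t).m by omega, (σ t).hpm]
  have w2 : HasWalk A (τ ((σ t).j)) (τ ((σ t').i)) := hasWalk_of_ray hτ (j_lt_i hσ h)
  have w3 : HasWalk A (τ ((σ t').i)) ((σ t').p b) := by
    refine ⟨b, (σ t').p, hb, fun x hx => (σ t').hpath.2 x (by omega), (σ t').hp0, rfl⟩
  have := w1.trans (w2.trans w3)
  rw [← heq] at this
  exact not_hasWalk_self hA _ this

/-- τ-indices appearing in block `t` lie in `[eIdx t, eIdx (t+1))`. -/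
lemma blockv_tau_idx (hσ : GoodSig σ) {t l : ℕ} (hl : l < blen S σ t)
    (hbranch : ¬ (S t = true ∧ ramp σ t < l)) :
    eIdx σ t ≤ eIdx σ t + l ∧ eIdx σ t + l < eIdx σ (t + 1) := by
  refine ⟨by omega, ?_⟩
  rw [eIdx_succ]
  have h1 := eIdx_lt_i hσ t
  have h2 := (σ t).hij
  unfold blen at hl
  by_cases hS : S t
  · rw [if_pos hS] at hl
    have : ¬ ramp σ t < l := fun hc => hbranch ⟨hS, hc⟩
    unfold ramp at this
    omega
  · rw [if_neg hS] at hl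
    omega

lemma blockv_inj (hτ : ∀ i, A (τ i) (τ (i+1))) (hinj : Function.Injective τ)
    (hA : DAcyclic A) (hσ : GoodSig σ) {t l t' l' : ℕ}
    (hl : l < blen S σ t) (hl' : l' < blen S σ t')
    (heq : blockv S σ t l = blockv S σ t' l') : t = t' ∧ l = l' := by
  unfold blockv at heq
  by_cases hb1 : S t = true ∧ ramp σ t < l
  · by_cases hb2 : S t' = true ∧ ramp σ t' < l'
    · rw [if_pos hb1, if_pos hb2] at heq
      have ham : l - ramp σ t < (σ t).m := by
        unfold blen at hl; rw [if_pos hb1.1] at hl; omega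
      have hbm : l' - ramp σ t' < (σ t').m := by
        unfold blen at hl'; rw [if_pos hb2.1] at hl'; omega
      rcases Nat.lt_trichotomy t t' with hc | hc | hc
      · exact absurd heq (interiors_disj hτ hinj hA hσ hc (by omega) ham (by omega) hbm)
      · subst hc
        have := (σ t).hpath.1 _ _ (by omega) (by omega) heq
        omega
      · exact absurd heq.symm (interiors_disj hτ hinj hA hσ hc (by omega) hbm (by omega) ham)
    · rw [if_pos hb1, if_neg hb2] at heq
      exact absurd heq ((σ t).hint _ (by omega) (by
        unfold blen at hl; rw [if_pos hb1.1] at hl; omega) _)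
  · by_cases hb2 : S t' = true ∧ ramp σ t' < l'
    · rw [if_neg hb1, if_pos hb2] at heq
      exact absurd heq.symm ((σ t').hint _ (by omega) (by
        unfold blen at hl'; rw [if_pos hb2.1] at hl'; omega) _)
    · rw [if_neg hb1, if_neg hb2] at heq
      have hidx := hinj heq
      have hr1 := blockv_tau_idx (S := S) hσ hl hb1
      have hr2 := blockv_tau_idx (S := S) hσ hl' hb2
      rcases Nat.lt_trichotomy t t' with hc | hc | hc
      · have := eIdx_mono hσ (show t + 1 ≤ t' by omega)
        omega
      · subst hc; omega
      · have := eIdx_mono hσ (show t' + 1 ≤ t by omega)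
        omega

end SkipSection
section SkipSection2

variable {V : Type*} {A : V → V → Prop} {τ : ℕ → V} {σ : ℕ → SkipDat A τ} {S S' : ℕ → Bool}

lemma eIdx_add_ramp (hσ : GoodSig σ) (t : ℕ) : eIdx σ t + ramp σ t = (σ t).i := by
  have := eIdx_lt_i hσ t
  unfold ramp
  omega

lemma blockv_arrow (hτ : ∀ i, A (τ i) (τ (i+1))) (hinj : Function.Injective τ)
    (hσ : GoodSig σ) {t l : ℕ} (hl : l + 1 < blen S σ t) :
    A (blockv S σ t l) (blockv S σ t (l + 1)) := by
  unfold blockv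
  by_cases hS : S t = true
  · have hblen : blen S σ t = ramp σ t + (σ t).m := by unfold blen; rw [if_pos hS]
    by_cases h1 : ramp σ t < l
    · rw [if_pos ⟨hS, h1⟩, if_pos ⟨hS, by omega⟩, show l + 1 - ramp σ t = (l - ramp σ t) + 1 by omega]
      exact (σ t).hpath.2 _ (by omega)
    · by_cases h2 : ramp σ t < l + 1
      · have hramp : l = ramp σ t := by omega
        rw [if_neg (fun hc => h1 hc.2), if_pos ⟨hS, h2⟩, hramp, eIdx_add_ramp hσ,
          show ramp σ t + 1 - ramp σ t = 1 by omega, ← (σ t).hp0]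
        have := (σ t).hpath.2 0 (by omega)
        simpa using this
      · rw [if_neg (fun hc => h1 hc.2), if_neg (fun hc => h2 hc.2),
          show eIdx σ t + (l + 1) = (eIdx σ t + l) + 1 by omega]
        exact hτ _
  · rw [if_neg (fun hc => hS hc.1), if_neg (fun hc => hS hc.1),
      show eIdx σ t + (l + 1) = (eIdx σ t + l) + 1 by omega]
    exact hτ _

lemma blockv_last (hτ : ∀ i, A (τ i) (τ (i+1))) (hinj : Function.Injective τ)
    (hσ : GoodSig σ) (t : ℕ) :
    A (blockv S σ t (blen S σ t - 1)) (τ ((σ t).j)) := by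
  have hei := eIdx_lt_i hσ t
  have hij := (σ t).hij
  have hm := m_pos (σ := σ) hinj t
  unfold blockv
  by_cases hS : S t = true
  · have hblen : blen S σ t = ramp σ t + (σ t).m := by unfold blen; rw [if_pos hS]
    by_cases h2 : 2 ≤ (σ t).m
    · rw [if_pos ⟨hS, by omega⟩, hblen,
        show ramp σ t + (σ t).m - 1 - ramp σ t = (σ t).m - 1 by omega, ← (σ t).hpm]
      have := (σ t).hpath.2 ((σ t).m - 1) (by omega)
      rw [show (σ t).m - 1 + 1 = (σ t).m by omega] at this
      exact this
    · have hm1 : (σ t).m = 1 := by omega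
      rw [if_neg (by rw [hblen]; omega : ¬ (S t = true ∧ ramp σ t < blen S σ t - 1)),
        hblen, hm1, show eIdx σ t + (ramp σ t + 1 - 1) = (σ t).i from by
          have := eIdx_add_ramp hσ t; omega, ← (σ t).hp0, ← (σ t).hpm, hm1]
      have := (σ t).hpath.2 0 (by omega)
      simpa using this
  · have hblen : blen S σ t = (σ t).j - eIdx σ t := by unfold blen; rw [if_neg hS]
    rw [if_neg (fun hc => hS hc.1), hblen,
      show eIdx σ t + ((σ t).j - eIdx σ t - 1) = (σ t).j - 1 by omega]
    have := hτ ((σ t).j - 1)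
    rw [show (σ t).j - 1 + 1 = (σ t).j by omega] at this
    exact this

lemma uRay_arrow (hτ : ∀ i, A (τ i) (τ (i+1))) (hinj : Function.Injective τ)
    (hσ : GoodSig σ) (n : ℕ) : A (uRay S σ n) (uRay S σ (n + 1)) := by
  obtain ⟨hs1, hs2⟩ := tof_spec (S := S) hinj hσ (σ := σ) n
  set T := Tof S σ n with hT
  rw [ofs_succ] at hs2
  by_cases hend : n + 1 < ofs S σ T + blen S σ T
  · have hT1 : Tof S σ (n + 1) = T := tof_eq hinj hσ (by omega) (by rw [ofs_succ]; omega)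
    show A (blockv S σ (Tof S σ n) (n - ofs S σ (Tof S σ n)))
      (blockv S σ (Tof S σ (n+1)) (n + 1 - ofs S σ (Tof S σ (n+1))))
    rw [hT1, ← hT, show n + 1 - ofs S σ T = (n - ofs S σ T) + 1 by omega]
    exact blockv_arrow hτ hinj hσ (by omega)
  · have hofs : n + 1 = ofs S σ (T + 1) := by rw [ofs_succ]; omega
    have hT1 : Tof S σ (n + 1) = T + 1 := by
      refine tof_eq hinj hσ (le_of_eq hofs.symm) ?_
      rw [ofs_succ (t := T + 1)]
      have := blen_pos (S := S) (σ := σ) hinj hσ (T + 1)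
      omega
    show A (blockv S σ (Tof S σ n) (n - ofs S σ (Tof S σ n)))
      (blockv S σ (Tof S σ (n+1)) (n + 1 - ofs S σ (Tof S σ (n+1))))
    rw [hT1, ← hT, show n + 1 - ofs S σ (T + 1) = 0 by omega,
      show n - ofs S σ T = blen S σ T - 1 by omega]
    have hv0 : blockv S σ (T + 1) 0 = τ ((σ T).j) := by
      unfold blockv
      rw [if_neg (by omega : ¬ (S (T+1) = true ∧ ramp σ (T+1) < 0)), Nat.add_zero, eIdx_succ]
    rw [hv0]
    exact blockv_last hτ hinj hσ T

lemma uRay_inj (hτ : ∀ i, A (τ i) (τ (i+1))) (hinj : Function.Injective τ)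
    (hA : DAcyclic A) (hσ : GoodSig σ) : Function.Injective (uRay S σ) := by
  intro n n' heq
  obtain ⟨h1, h2⟩ := tof_spec (S := S) hinj hσ (σ := σ) n
  obtain ⟨h1', h2'⟩ := tof_spec (S := S) hinj hσ (σ := σ) n'
  rw [ofs_succ] at h2 h2'
  obtain ⟨hTT, hll⟩ := blockv_inj (S := S) hτ hinj hA hσ
    (by omega : n - ofs S σ (Tof S σ n) < blen S σ (Tof S σ n))
    (by omega : n' - ofs S σ (Tof S σ n') < blen S σ (Tof S σ n')) heq
  rw [hTT] at h1 h2 hll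
  omega

lemma uRay_isRay (hτ : ∀ i, A (τ i) (τ (i+1))) (hinj : Function.Injective τ)
    (hA : DAcyclic A) (hσ : GoodSig σ) : IsRay A (uRay S σ) :=
  ⟨uRay_inj hτ hinj hA hσ, uRay_arrow hτ hinj hσ⟩

lemma uRay_val (hinj : Function.Injective τ) (hσ : GoodSig σ) {t l : ℕ}
    (hl : l < blen S σ t) : uRay S σ (ofs S σ t + l) = blockv S σ t l := by
  have hT : Tof S σ (ofs S σ t + l) = t :=
    tof_eq hinj hσ (by omega) (by rw [ofs_succ]; omega)
  unfold uRay
  rw [hT, show ofs S σ t + l - ofs S σ t = l by omega]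

lemma mem_interior_range (hinj : Function.Injective τ) (hσ : GoodSig σ) {t : ℕ}
    (hS : S t = true) (hm : 2 ≤ (σ t).m) : (σ t).p 1 ∈ Set.range (uRay S σ) := by
  have hblen : blen S σ t = ramp σ t + (σ t).m := by unfold blen; rw [if_pos hS]
  refine ⟨ofs S σ t + (ramp σ t + 1), ?_⟩
  rw [uRay_val hinj hσ (by omega)]
  unfold blockv
  rw [if_pos ⟨hS, by omega⟩, show ramp σ t + 1 - ramp σ t = 1 by omega]

lemma not_mem_tau_gap (hinj : Function.Injective τ) (hσ : GoodSig σ) {t k : ℕ}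
    (hS : S t = true) (hik : (σ t).i < k) (hkj : k < (σ t).j) :
    τ k ∉ Set.range (uRay S σ) := by
  rintro ⟨n, hn⟩
  obtain ⟨h1, h2⟩ := tof_spec (S := S) hinj hσ (σ := σ) n
  rw [ofs_succ] at h2
  set T := Tof S σ n with hT
  set l := n - ofs S σ T with hldef
  have hl : l < blen S σ T := by omega
  have hval : blockv S σ T l = τ k := hn
  unfold blockv at hval
  by_cases hb : S T = true ∧ ramp σ T < l
  · rw [if_pos hb] at hval
    exact (σ T).hint _ (by omega) (by
      have : blen S σ T = ramp σ T + (σ T).m := by unfold blen; rw [if_pos hb.1]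
      omega) k hval
  · rw [if_neg hb] at hval
    have hidx := hinj hval
    have hr := blockv_tau_idx (S := S) hσ hl hb
    have hkin : eIdx σ t ≤ k ∧ k < eIdx σ (t + 1) := by
      have := eIdx_lt_i hσ t
      rw [eIdx_succ]
      omega
    have hTt : T = t := by
      rcases Nat.lt_trichotomy T t with hc | hc | hc
      · have := eIdx_mono hσ (show T + 1 ≤ t by omega)
        omega
      · exact hc
      · have := eIdx_mono hσ (show t + 1 ≤ T by omega)
        omega
    subst hTt
    -- τ-branch with S T true forces l ≤ ramp, so index ≤ i < k
    have hle : ¬ ramp σ T < l := fun hc => hb ⟨hS, hc⟩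
    have := eIdx_add_ramp hσ T
    omega

lemma mem_tau_noskip (hinj : Function.Injective τ) (hσ : GoodSig σ) {t k : ℕ}
    (hS : S t = false) (hek : eIdx σ t ≤ k) (hkj : k < (σ t).j) :
    τ k ∈ Set.range (uRay S σ) := by
  have hblen : blen S σ t = (σ t).j - eIdx σ t := by
    unfold blen; rw [if_neg (by simp [hS])]
  refine ⟨ofs S σ t + (k - eIdx σ t), ?_⟩
  rw [uRay_val hinj hσ (by omega)]
  unfold blockv
  rw [if_neg (by simp [hS]), show eIdx σ t + (k - eIdx σ t) = k by omega]

lemma interior_not_mem (hτ : ∀ i, A (τ i) (τ (i+1))) (hinj : Function.Injective τ)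
    (hA : DAcyclic A) (hσ : GoodSig σ) {t a : ℕ}
    (hS : S t = false) (ha : 0 < a) (ham : a < (σ t).m) :
    (σ t).p a ∉ Set.range (uRay S σ) := by
  rintro ⟨n, hn⟩
  obtain ⟨h1, h2⟩ := tof_spec (S := S) hinj hσ (σ := σ) n
  rw [ofs_succ] at h2
  set T := Tof S σ n with hT
  set l := n - ofs S σ T with hldef
  have hl : l < blen S σ T := by omega
  have hval : blockv S σ T l = (σ t).p a := hn
  unfold blockv at hval
  by_cases hb : S T = true ∧ ramp σ T < l
  · rw [if_pos hb] at hval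
    have hTm : l - ramp σ T < (σ T).m := by
      have : blen S σ T = ramp σ T + (σ T).m := by unfold blen; rw [if_pos hb.1]
      omega
    have hTt : T ≠ t := fun hc => by rw [hc] at hb; rw [hb.1] at hS; exact Bool.noConfusion hS
    rcases Nat.lt_or_ge T t with hc | hc
    · exact interiors_disj hτ hinj hA hσ hc (by omega) hTm ha ham hval
    · exact interiors_disj hτ hinj hA hσ (by omega) ha ham (by omega) hTm hval.symm
  · rw [if_neg hb] at hval
    exact (σ t).hint a ha ham _ hval.symm

end SkipSection2
section SkipBound

variable {V : Type*} {A : V → V → Prop} {τ : ℕ → V} {σ : ℕ → SkipDat A τ}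

def wv (σ : ℕ → SkipDat A τ) (t : ℕ) : V :=
  if 2 ≤ (σ t).m then (σ t).p 1 else τ ((σ t).i + 1)

lemma wv_mem_diff (hτ : ∀ i, A (τ i) (τ (i+1))) (hinj : Function.Injective τ)
    (hA : DAcyclic A) (hσ : GoodSig σ) {S S' : ℕ → Bool} {t : ℕ}
    (hS : S t = true) (hS' : S' t = false) :
    wv σ t ∈ (Set.range (uRay S σ) \ Set.range (uRay S' σ)) ∪
      (Set.range (uRay S' σ) \ Set.range (uRay S σ)) := by
  have hm1 := m_pos (σ := σ) hinj t
  unfold wv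
  by_cases hm : 2 ≤ (σ t).m
  · rw [if_pos hm]
    exact Or.inl ⟨mem_interior_range hinj hσ hS hm,
      interior_not_mem hτ hinj hA hσ hS' (by omega) (by omega)⟩
  · rw [if_neg hm]
    have hchord : (σ t).i + 1 < (σ t).j := by
      rcases (σ t).hside with h | h
      · omega
      · exact h
    refine Or.inr ⟨mem_tau_noskip hinj hσ hS' (by have := eIdx_lt_i hσ t; omega) hchord,
      not_mem_tau_gap hinj hσ hS (by omega) hchord⟩

lemma wv_inj (hτ : ∀ i, A (τ i) (τ (i+1))) (hinj : Function.Injective τ)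
    (hA : DAcyclic A) (hσ : GoodSig σ) : Function.Injective (wv σ) := by
  have key : ∀ t t', t < t' → wv σ t = wv σ t' → False := by
    intro t t' hlt heq
    have hm1 := m_pos (σ := σ) hinj t
    have hm1' := m_pos (σ := σ) hinj t'
    unfold wv at heq
    by_cases h1 : 2 ≤ (σ t).m <;> by_cases h2 : 2 ≤ (σ t').m
    · rw [if_pos h1, if_pos h2] at heq
      exact interiors_disj hτ hinj hA hσ hlt (by omega) (by omega) (by omega) (by omega) heq
    · rw [if_pos h1, if_neg h2] at heq
      exact (σ t).hint 1 (by omega) (by omega) _ heq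
    · rw [if_neg h1, if_pos h2] at heq
      exact (σ t').hint 1 (by omega) (by omega) _ heq.symm
    · rw [if_neg h1, if_neg h2] at heq
      have := hinj heq
      have h3 := j_lt_i hσ hlt
      have h4 := (σ t).hij
      omega
  intro t t' heq
  by_contra hne
  rcases Nat.lt_or_ge t t' with h | h
  · exact key t t' h heq
  · exact key t' t (by omega) heq.symm

lemma skip_bound (hA : DAcyclic A) (hτ : IsRay A τ) (hfin : (RayClasses A).Finite) :
    ∃ N : ℕ, ∀ d : SkipDat A τ, d.i < N := by
  by_contra hcon
  push_neg at hcon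
  have hcon' : ∀ N : ℕ, ∃ d : SkipDat A τ, N ≤ d.i := fun N => hcon N
  set σ : ℕ → SkipDat A τ :=
    fun t => Nat.rec (hcon' 1).choose (fun _ d => (hcon' (d.j + 1)).choose) t with hσdef
  have hσ : GoodSig σ := by
    constructor
    · exact (hcon' 1).choose_spec
    · intro t
      exact (hcon' ((σ t).j + 1)).choose_spec
  set Sk : ℕ → ℕ → Bool := fun k n => decide (2 ^ k ∣ n) with hSkdef
  have hdiff : ∀ k l : ℕ, k < l → {t : ℕ | Sk k t ≠ Sk l t}.Infinite := by
    intro k l hkl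
    apply Set.infinite_of_injective_forall_mem
      (f := fun m : ℕ => 2 ^ k * (2 ^ (l - k) * m + 1))
    · intro a b h
      simp only at h
      have h2 : (0:ℕ) < 2 ^ k := pow_pos (by norm_num) k
      have h3 : (0:ℕ) < 2 ^ (l - k) := pow_pos (by norm_num) (l - k)
      have h4 : 2 ^ (l - k) * a + 1 = 2 ^ (l - k) * b + 1 := Nat.eq_of_mul_eq_mul_left h2 h
      have h5 : 2 ^ (l - k) * a = 2 ^ (l - k) * b := by omega
      exact Nat.eq_of_mul_eq_mul_left h3 h5
    · intro m
      have hP : 2 ^ k ∣ 2 ^ k * (2 ^ (l - k) * m + 1) := dvd_mul_right _ _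
      have hQ : ¬ 2 ^ l ∣ 2 ^ k * (2 ^ (l - k) * m + 1) := by
        intro hdvd
        rw [show (2:ℕ) ^ l = 2 ^ k * 2 ^ (l - k) by
          rw [← pow_add]; congr 1; omega] at hdvd
        have hd2 : 2 ^ (l - k) ∣ 2 ^ (l - k) * m + 1 :=
          (Nat.mul_dvd_mul_iff_left (pow_pos (by norm_num) k)).1 hdvd
        have hd3 : 2 ^ (l - k) ∣ 1 := (Nat.dvd_add_right (dvd_mul_right _ m)).1 hd2
        have hd4 := Nat.le_of_dvd one_pos hd3
        have : (2:ℕ) ≤ 2 ^ (l - k) := by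
          calc (2:ℕ) = 2 ^ 1 := by norm_num
          _ ≤ 2 ^ (l - k) := Nat.pow_le_pow_right (by norm_num) (by omega)
        omega
      show Sk k (2 ^ k * (2 ^ (l - k) * m + 1)) ≠ Sk l (2 ^ k * (2 ^ (l - k) * m + 1))
      simp only [hSkdef, ne_eq, decide_eq_decide]
      tauto
  have hpair : ∀ k l : ℕ, k < l → ¬ RayEquiv (uRay (Sk k) σ) (uRay (Sk l) σ) := by
    intro k l hkl hequiv
    have hDfin := (hequiv.diff_finite).union (hequiv.symm.diff_finite)
    refine (Set.not_infinite.2 hDfin) ?_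
    haveI := (hdiff k l hkl).to_subtype
    apply Set.infinite_of_injective_forall_mem
      (f := fun t : {t : ℕ | Sk k t ≠ Sk l t} => wv σ t.1)
    · intro a b h
      exact Subtype.ext (wv_inj hτ.2 hτ.1 hA hσ h)
    · rintro ⟨t, ht⟩
      simp only [Set.mem_setOf_eq] at ht
      show wv σ t ∈ _
      rcases Bool.eq_false_or_eq_true (Sk k t) with h1 | h1
      · have h2 : Sk l t = false := by
          cases hSl : Sk l t
          · rfl
          · rw [h1, hSl] at ht; exact absurd rfl ht
        exact wv_mem_diff hτ.2 hτ.1 hA hσ h1 h2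
      · have h2 : Sk l t = true := by
          cases hSl : Sk l t
          · rw [h1, hSl] at ht; exact absurd rfl ht
          · rfl
        rcases wv_mem_diff hτ.2 hτ.1 hA hσ h2 h1 with h | h
        · exact Or.inr h
        · exact Or.inl h
  haveI hFin : Finite ↥(RayClasses A) := hfin.to_subtype
  have hF : Function.Injective (fun k : ℕ =>
      (⟨classOf A (uRay (Sk k) σ),
        classOf_mem_rayClasses (uRay_isRay hτ.2 hτ.1 hA hσ)⟩ : ↥(RayClasses A))) := by
    intro k l hkl
    by_contra hne
    have hcl : classOf A (uRay (Sk k) σ) = classOf A (uRay (Sk l) σ) :=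
      congrArg Subtype.val hkl
    have hmem : uRay (Sk l) σ ∈ classOf A (uRay (Sk k) σ) := by
      rw [hcl]; exact mem_classOf_self (uRay_isRay hτ.2 hτ.1 hA hσ)
    have hre : RayEquiv (uRay (Sk k) σ) (uRay (Sk l) σ) := hmem.2
    rcases Nat.lt_or_ge k l with h | h
    · exact hpair k l h hre
    · exact hpair l k (by omega) hre.symm
  haveI := Finite.of_injective _ hF
  exact not_finite ℕ

end SkipBound
section Flip

variable {P : Type*} [PartialOrder P] {M : Set (P × P)} {ρ : ℕ → P}

/-- Data for the tail-flip construction: `ρ` is an alternating tail (lower vertex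
matched upwards, then an unmatched cover down), with no skips anywhere along it. -/
structure FlipSetup (M : Set (P × P)) (ρ : ℕ → P) : Prop where
  hmorse : IsMorse M
  hinj : Function.Injective ρ
  hup : ∀ k, (ρ (2*k+1), ρ (2*k)) ∈ M
  hdown : ∀ k, ρ (2*k+2) ⋖ ρ (2*k+1)
  hdnm : ∀ k, (ρ (2*k+1), ρ (2*k+2)) ∉ M
  hnoskip : ∀ d : SkipDat (HasseM M) ρ, False

def Uset (ρ : ℕ → P) : Set (P × P) := {e | ∃ k, e = (ρ (2*k+1), ρ (2*k))}

def Wset (ρ : ℕ → P) : Set (P × P) := {e | ∃ k, e = (ρ (2*k+1), ρ (2*k+2))}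

def flipM (M : Set (P × P)) (ρ : ℕ → P) : Set (P × P) := (M \ Uset ρ) ∪ Wset ρ

/-- Prepend a vertex to a simple path. -/
lemma path_cons {V : Type*} {A : V → V → Prop} {m : ℕ} {q : ℕ → V} {x : V}
    (hq : IsPathOn A m q) (hx : A x (q 0)) (hne : ∀ l, l ≤ m → x ≠ q l) :
    IsPathOn A (m + 1) (fun l => if l = 0 then x else q (l - 1)) := by
  constructor
  · intro i j hi hj hij
    simp only at hij
    by_cases h1 : i = 0 <;> by_cases h2 : j = 0
    · omega
    · rw [if_pos h1, if_neg h2] at hij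
      exact absurd hij (hne _ (by omega))
    · rw [if_neg h1, if_pos h2] at hij
      exact absurd hij.symm (hne _ (by omega))
    · rw [if_neg h1, if_neg h2] at hij
      have := hq.1 _ _ (by omega) (by omega) hij
      omega
  · intro i hi
    show A (if i = 0 then x else q (i - 1)) (if i + 1 = 0 then x else q (i + 1 - 1))
    rw [if_neg (by omega : ¬ i + 1 = 0), show i + 1 - 1 = i by omega]
    by_cases h1 : i = 0
    · rw [if_pos h1, h1]
      exact hx
    · rw [if_neg h1]
      have := hq.2 (i - 1) (by omega)
      rw [show i - 1 + 1 = i by omega] at this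
      exact this

namespace FlipSetup

variable (hF : FlipSetup M ρ)
include hF

lemma rho_arrow : ∀ n, HasseM M (ρ n) (ρ (n + 1)) := by
  intro n
  rcases Nat.even_or_odd n with ⟨k, hk⟩ | ⟨k, hk⟩
  · rw [show n = 2*k by omega, show 2*k + 1 = 2*k+1 from rfl]
    exact Or.inr (hF.hup k)
  · rw [show n = 2*k+1 by omega, show 2*k+1 + 1 = 2*k+2 from rfl]
    exact Or.inl ⟨hF.hdown k, hF.hdnm k⟩

lemma rho_ray : IsRay (HasseM M) ρ := ⟨hF.hinj, hF.rho_arrow⟩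

/-- Any matching edge touching `ρ` is one of the tail edges. -/
lemma partner {e : P × P} (he : e ∈ M) {s : ℕ} (hs : e.1 = ρ s ∨ e.2 = ρ s) :
    ∃ k, e = (ρ (2*k+1), ρ (2*k)) := by
  rcases Nat.even_or_odd s with ⟨k, hk⟩ | ⟨k, hk⟩
  · refine ⟨k, matched_eq hF.hmorse.1 he (hF.hup k) ?_⟩
    rw [show 2*k = s by omega]
    tauto
  · refine ⟨k, matched_eq hF.hmorse.1 he (hF.hup k) ?_⟩
    rw [show 2*k+1 = s by omega]
    tauto

/-- Edges of `M \ U` avoid `ρ` completely. -/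
lemma diff_off {e : P × P} (he : e ∈ M \ Uset ρ) (s : ℕ) : e.1 ≠ ρ s ∧ e.2 ≠ ρ s := by
  constructor
  · intro hc
    obtain ⟨k, hk⟩ := hF.partner he.1 (Or.inl hc)
    exact he.2 ⟨k, hk⟩
  · intro hc
    obtain ⟨k, hk⟩ := hF.partner he.1 (Or.inr hc)
    exact he.2 ⟨k, hk⟩

lemma rho_ne {a b : ℕ} (h : a ≠ b) : ρ a ≠ ρ b :=
  fun hc => h (hF.hinj hc)

lemma flip_matching : IsMatching (flipM M ρ) := by
  constructor
  · rintro e (he | he)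
    · exact hF.hmorse.1.1 e he.1
    · obtain ⟨k, rfl⟩ := he
      exact hF.hdown k
  · rintro e (he | he) f (hf | hf) hne
    · exact hF.hmorse.1.2 e he.1 f hf.1 hne
    · obtain ⟨k, rfl⟩ := hf
      have h1 := hF.diff_off he (2*k+1)
      have h2 := hF.diff_off he (2*k+2)
      exact ⟨h1.1, h2.1, h1.2, h2.2⟩
    · obtain ⟨k, rfl⟩ := he
      have h1 := hF.diff_off hf (2*k+1)
      have h2 := hF.diff_off hf (2*k+2)
      exact ⟨fun hc => h1.1 hc.symm, fun hc => h1.2 hc.symm,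
        fun hc => h2.1 hc.symm, fun hc => h2.2 hc.symm⟩
    · obtain ⟨k, rfl⟩ := he
      obtain ⟨k', rfl⟩ := hf
      have hkk : k ≠ k' := fun hc => hne (by rw [hc])
      exact ⟨hF.rho_ne (by omega), hF.rho_ne (by omega),
        hF.rho_ne (by omega), hF.rho_ne (by omega)⟩

/-- Membership in `flipM` for pairs not both on `ρ` agrees with `M`. -/
lemma flip_mem_iff {x y : P} (h : (∀ s, x ≠ ρ s) ∨ (∀ s, y ≠ ρ s)) :
    ((x, y) ∈ flipM M ρ ↔ (x, y) ∈ M) := by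
  constructor
  · rintro (hm | hm)
    · exact hm.1
    · obtain ⟨k, hk⟩ := hm
      have h1 : x = ρ (2*k+1) := congrArg Prod.fst hk
      have h2 : y = ρ (2*k+2) := congrArg Prod.snd hk
      rcases h with h | h
      · exact absurd h1 (h _)
      · exact absurd h2 (h _)
  · intro hm
    left
    refine ⟨hm, ?_⟩
    rintro ⟨k, hk⟩
    have h1 : x = ρ (2*k+1) := congrArg Prod.fst hk
    have h2 : y = ρ (2*k) := congrArg Prod.snd hk
    rcases h with h | h
    · exact absurd h1 (h _)
    · exact absurd h2 (h _)

/-- Arrows of the flipped digraph agree with `HasseM M` away from `ρ`. -/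
lemma flip_arrow_iff {x y : P} (h : (∀ s, x ≠ ρ s) ∨ (∀ s, y ≠ ρ s)) :
    (HasseM (flipM M ρ) x y ↔ HasseM M x y) := by
  unfold HasseM
  rw [hF.flip_mem_iff h, hF.flip_mem_iff (h.symm.imp id id)]

/-- A single `HasseM M`-arrow between vertices of `ρ` goes exactly one step forward. -/
lemma h_arrow_rho {a b : ℕ} (h : HasseM M (ρ a) (ρ b)) : b = a + 1 := by
  rcases Nat.lt_trichotomy b (a + 1) with hc | hc | hc
  · rcases Nat.lt_or_ge b a with hc' | hc'
    · exfalso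
      have hw := (hasWalk_of_ray hF.rho_arrow hc').trans (HasWalk.single h)
      exact not_hasWalk_self hF.hmorse.2 _ hw
    · have hab : a = b := by omega
      exfalso
      rw [hab] at h
      exact hasseM_irrefl hF.hmorse.1 _ h
  · exact hc
  · -- chord skip
    exfalso
    refine hF.hnoskip ⟨a, b, 1, fun l => if l = 0 then ρ a else ρ b, by omega, ⟨?_, ?_⟩,
      by simp, by simp, ?_, Or.inr (by omega)⟩
    · intro i j hi hj hij
      interval_cases i <;> interval_cases j <;> simp_all
      · exact absurd (hF.hinj hij) (by omega)
      · exact absurd (hF.hinj hij.symm) (by omega)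
    · intro i hi
      have : i = 0 := by omega
      subst this
      simpa using h
    · intro l h1 h2
      omega

/-- A walk of length ≥ 2 in `HasseM M` between vertices of `ρ` with interior off `ρ`
is impossible. -/
lemma seg_false {n : ℕ} {p : ℕ → P} {a b : ℕ} (hw : WalkN (HasseM M) n p) (hn : 2 ≤ n)
    (h0 : p 0 = ρ a) (hend : p n = ρ b)
    (hint : ∀ l, 0 < l → l < n → ∀ c, p l ≠ ρ c) : False := by
  rcases Nat.lt_or_ge a b with hab | hab
  · -- forward: make a skip
    have hsub : WalkN (HasseM M) (n - 1) (fun x => p (1 + x)) := by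
      intro x hx
      show HasseM M (p (1 + x)) (p (1 + (x + 1)))
      rw [show 1 + (x + 1) = (1 + x) + 1 by omega]
      exact hw _ (by omega)
    have hne : p 1 ≠ p n := by
      rw [hend]
      exact hint 1 (by omega) (by omega) b
    obtain ⟨m, q, hq, hm, hq0, hqm, hqint⟩ := walk_to_path (n - 1) _ hsub (by omega)
      (by
        show p (1 + 0) ≠ p (1 + (n - 1))
        rw [show 1 + (n-1) = n by omega]
        exact hne)
    -- q : from p 1 to p n = ρ b, interior at p-positions in (1, n)
    have hq0' : q 0 = p 1 := by rw [hq0]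
    have hqm' : q m = ρ b := by
      rw [hqm, show 1 + (n-1) = n by omega, hend]
    have hqoff : ∀ l, l < m → ∀ c, q l ≠ ρ c := by
      intro l hl c
      rcases Nat.eq_zero_or_pos l with rfl | hl0
      · rw [hq0']
        exact hint 1 (by omega) (by omega) c
      · obtain ⟨l', h1', h2', hql⟩ := hqint l hl0 hl
        rw [hql]
        show p (1 + l') ≠ ρ c
        exact hint _ (by omega) (by omega) c
    refine hF.hnoskip ⟨a, b, m + 1, fun l => if l = 0 then ρ a else q (l - 1), hab,
      ?_, by simp, ?_, ?_, Or.inl (by omega)⟩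
    · refine path_cons hq ?_ ?_
      · rw [hq0', ← h0]
        exact hw 0 (by omega)
      · intro l hl hc
        rcases Nat.lt_or_ge l m with hlm | hlm
        · exact hqoff l hlm a hc.symm
        · rw [show l = m by omega, hqm'] at hc
          exact hF.rho_ne (by omega) hc
    · show (if m + 1 = 0 then ρ a else q (m + 1 - 1)) = ρ b
      rw [if_neg (by omega), show m + 1 - 1 = m by omega, hqm']
    · intro l h1 h2 c
      show (if l = 0 then ρ a else q (l - 1)) ≠ ρ c
      rw [if_neg (by omega)]
      exact hqoff (l - 1) (by omega) c
  · -- backward or stationary: closed walk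
    rcases Nat.lt_or_ge b a with hba | hba
    · have hw1 : HasWalk (HasseM M) (ρ a) (ρ b) := ⟨n, p, by omega, hw, h0, hend⟩
      have hw2 : HasWalk (HasseM M) (ρ b) (ρ a) := hasWalk_of_ray hF.rho_arrow hba
      exact not_hasWalk_self hF.hmorse.2 _ (hw1.trans hw2)
    · have hab' : a = b := by omega
      subst hab'
      exact no_closed_walkN hF.hmorse.2 n p hw (by rw [h0, hend]) (by omega)

end FlipSetup

end Flip
section Flip2

variable {P : Type*} [PartialOrder P] {M : Set (P × P)} {ρ : ℕ → P}

namespace FlipSetup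

variable (hF : FlipSetup M ρ)
include hF

lemma flip_pair_rho {a b : ℕ} (h : (ρ a, ρ b) ∈ flipM M ρ) : ∃ k, a = 2*k+1 ∧ b = 2*k+2 := by
  rcases h with h | ⟨k, hk⟩
  · exact absurd rfl ((hF.diff_off h a).1)
  · have h1 : ρ a = ρ (2*k+1) := congrArg Prod.fst hk
    have h2 : ρ b = ρ (2*k+2) := congrArg Prod.snd hk
    exact ⟨k, hF.hinj h1, hF.hinj h2⟩

lemma arr_rho {a b : ℕ} (h : HasseM (flipM M ρ) (ρ a) (ρ b)) : b + 1 = a := by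
  rcases h with ⟨hc, hnm⟩ | hmem
  · by_cases hM : (ρ a, ρ b) ∈ M
    · obtain ⟨k, hk⟩ := hF.partner hM (Or.inl rfl)
      have h1 := hF.hinj (congrArg Prod.fst hk)
      have h2 := hF.hinj (congrArg Prod.snd hk)
      omega
    · have harr : HasseM M (ρ a) (ρ b) := Or.inl ⟨hc, hM⟩
      have hb := hF.h_arrow_rho harr
      exfalso
      rcases Nat.even_or_odd a with ⟨k, hk⟩ | ⟨k, hk⟩
      · have hcov := hF.hmorse.1.1 _ (hF.hup k)
        rw [show a = 2*k by omega, show b = 2*k+1 by omega] at hc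
        exact absurd hcov.lt (not_lt_of_gt hc.lt)
      · apply hnm
        right
        refine ⟨k, ?_⟩
        rw [show a = 2*k+1 by omega, show b = 2*k+2 by omega]
  · obtain ⟨k, hk1, hk2⟩ := hF.flip_pair_rho hmem
    omega

/-- A positive-length walk in the flipped digraph between `ρ`-vertices with interior
off `ρ` is a single reversed arrow. -/
lemma seg1 {n : ℕ} {p : ℕ → P} {a b : ℕ} (hw : WalkN (HasseM (flipM M ρ)) n p)
    (hn : 1 ≤ n) (h0 : p 0 = ρ a) (hend : p n = ρ b)
    (hint : ∀ l, 0 < l → l < n → ∀ c, p l ≠ ρ c) : n = 1 ∧ b + 1 = a := by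
  rcases Nat.lt_or_ge n 2 with h2 | h2
  · have hn1 : n = 1 := by omega
    subst hn1
    have := hw 0 (by omega)
    rw [h0, hend] at this
    exact ⟨rfl, hF.arr_rho this⟩
  · exfalso
    have hw' : WalkN (HasseM M) n p := by
      intro i hi
      have harr := hw i hi
      rcases Nat.eq_zero_or_pos i with rfl | hi0
      · exact (hF.flip_arrow_iff (Or.inr (fun s => hint 1 (by omega) (by omega) s))).1 harr
      · exact (hF.flip_arrow_iff (Or.inl (fun s => hint i hi0 (by omega) s))).1 harr
    exact hF.seg_false hw' h2 h0 hend hint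

lemma key_walk : ∀ n : ℕ, ∀ p : ℕ → P, WalkN (HasseM (flipM M ρ)) n p →
    ∀ a b : ℕ, p 0 = ρ a → p n = ρ b → a = b + n := by
  intro n
  induction n using Nat.strong_induction_on with
  | _ n IH =>
    intro p hw a b h0 hend
    rcases Nat.eq_zero_or_pos n with rfl | hn
    · rw [h0] at hend
      have := hF.hinj hend
      omega
    · classical
      have hex : ∃ l, 1 ≤ l ∧ l ≤ n ∧ ∃ c, p l = ρ c := ⟨n, by omega, by omega, b, hend⟩
      set L := Nat.find hex with hL
      obtain ⟨hL1, hLn, c, hc⟩ := Nat.find_spec hex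
      have hmin : ∀ l, 0 < l → l < L → ∀ c', p l ≠ ρ c' := by
        intro l hl1 hlL c' hc'
        exact Nat.find_min hex (m := l) hlL ⟨hl1, by omega, c', hc'⟩
      have hseg := hF.seg1 (fun i hi => hw i (by omega)) hL1 h0 hc hmin
      obtain ⟨hLeq, hcc⟩ := hseg
      have hsuf : WalkN (HasseM (flipM M ρ)) (n - 1) (fun x => p (1 + x)) := by
        intro x hx
        show HasseM (flipM M ρ) (p (1 + x)) (p (1 + (x + 1)))
        rw [show 1 + (x + 1) = (1 + x) + 1 by omega]
        exact hw _ (by omega)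
      have hIH := IH (n - 1) (by omega) _ hsuf c b
        (by show p (1 + 0) = ρ c; rw [show (1:ℕ) + 0 = L by omega]; exact hc)
        (by show p (1 + (n - 1)) = ρ b; rw [show 1 + (n - 1) = n by omega]; exact hend)
      omega

lemma flip_dacyclic : DAcyclic (HasseM (flipM M ρ)) := by
  rintro ⟨n, p, hpath, hclose⟩
  have hq : WalkN (HasseM (flipM M ρ)) (n + 1) (fun k => if k ≤ n then p k else p 0) := by
    intro i hi
    show HasseM (flipM M ρ) (if i ≤ n then p i else p 0) (if i + 1 ≤ n then p (i+1) else p 0)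
    by_cases h1 : i + 1 ≤ n
    · rw [if_pos h1, if_pos (by omega : i ≤ n)]
      exact hpath.2 i (by omega)
    · rw [if_neg h1, if_pos (by omega : i ≤ n), show i = n by omega]
      exact hclose
  by_cases hvis : ∃ k, k ≤ n ∧ ∃ c, p k = ρ c
  · obtain ⟨k, hk, c, hc⟩ := hvis
    rcases Nat.eq_zero_or_pos k with rfl | hkpos
    · have := hF.key_walk (n+1) _ hq c c (by simpa using hc)
        (by rw [if_neg (by omega)]; exact hc)
      omega
    · have hw1 : HasWalk (HasseM (flipM M ρ)) (ρ c) (p 0) := by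
        refine ⟨n + 1 - k, fun x => (fun k => if k ≤ n then p k else p 0) (k + x), by omega,
          ?_, ?_, ?_⟩
        · intro x hx
          show HasseM (flipM M ρ) ((fun k => if k ≤ n then p k else p 0) (k + x))
            ((fun k => if k ≤ n then p k else p 0) (k + (x+1)))
          rw [show k + (x + 1) = (k + x) + 1 by omega]
          exact hq _ (by omega)
        · show (if k + 0 ≤ n then p (k+0) else p 0) = ρ c
          rw [if_pos (by omega)]
          rw [show k + 0 = k by omega]
          exact hc
        · show (if k + (n+1-k) ≤ n then p (k + (n+1-k)) else p 0) = p 0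
          rw [if_neg (by omega)]
      have hw2 : HasWalk (HasseM (flipM M ρ)) (p 0) (ρ c) := by
        refine ⟨k, p, hkpos, fun i hi => hpath.2 i (by omega), rfl, hc⟩
      obtain ⟨n', p', hn', hwp', h0', hend'⟩ := hw1.trans hw2
      have := hF.key_walk n' p' hwp' c c h0' hend'
      omega
  · push_neg at hvis
    have hqH : WalkN (HasseM M) (n + 1) (fun k => if k ≤ n then p k else p 0) := by
      intro i hi
      have harr := hq i hi
      refine (hF.flip_arrow_iff ?_).1 harr
      left
      intro s
      show (if i ≤ n then p i else p 0) ≠ ρ s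
      by_cases h1 : i ≤ n
      · rw [if_pos h1]
        exact fun hc => (hvis i h1 s) hc
      · rw [if_neg h1]
        exact fun hc => (hvis 0 (by omega) s) hc
    refine no_closed_walkN hF.hmorse.2 (n+1) _ hqH ?_ (by omega)
    show (if (0:ℕ) ≤ n then p 0 else p 0) = (if n + 1 ≤ n then p (n+1) else p 0)
    rw [if_pos (by omega), if_neg (by omega)]

lemma flip_morse : IsMorse (flipM M ρ) := ⟨hF.flip_matching, hF.flip_dacyclic⟩

/-- Rays of the flipped digraph eventually avoid `ρ`. -/
lemma flip_ray_tail {s : ℕ → P} (hs : IsRay (HasseM (flipM M ρ)) s) :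
    ∃ T, ∀ n, T ≤ n → ∀ c, s n ≠ ρ c := by
  by_contra hcon
  push_neg at hcon
  obtain ⟨n0, hn0, c0, hc0⟩ := hcon 0
  obtain ⟨n1, hn1, c1, hc1⟩ := hcon (n0 + c0 + 1)
  have hw : WalkN (HasseM (flipM M ρ)) (n1 - n0) (fun x => s (n0 + x)) := by
    intro x hx
    show HasseM (flipM M ρ) (s (n0 + x)) (s (n0 + (x + 1)))
    rw [show n0 + (x + 1) = (n0 + x) + 1 by omega]
    exact hs.2 _
  have := hF.key_walk (n1 - n0) _ hw c0 c1 (by simpa using hc0)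
    (by show s (n0 + (n1 - n0)) = ρ c1; rw [show n0 + (n1 - n0) = n1 by omega]; exact hc1)
  omega

/-- A ray of `HasseM M` either eventually avoids `ρ` or is equivalent to `ρ`. -/
lemma h_ray_dichotomy {s : ℕ → P} (hs : IsRay (HasseM M) s) :
    (∃ T, ∀ n, T ≤ n → ∀ c, s n ≠ ρ c) ∨ RayEquiv ρ s := by
  by_cases hvis : ∃ T, ∀ n, T ≤ n → ∀ c, s n ≠ ρ c
  · exact Or.inl hvis
  · right
    push_neg at hvis
    obtain ⟨n0, hn0, c0, hc0⟩ := hvis 0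
    have claim : ∀ k, s (n0 + k) = ρ (c0 + k) := by
      intro k
      induction k with
      | zero => simpa using hc0
      | succ k IH =>
        classical
        obtain ⟨n', hn', c', hc'⟩ := hvis (n0 + k + 1)
        have hex : ∃ l, 1 ≤ l ∧ ∃ c, s (n0 + k + l) = ρ c :=
          ⟨n' - (n0 + k), by omega, c', by
            rw [show n0 + k + (n' - (n0 + k)) = n' by omega]; exact hc'⟩
        obtain ⟨hL1, c'', hc''⟩ := Nat.find_spec hex
        have hmin : ∀ l, 0 < l → l < Nat.find hex → ∀ c2, s (n0 + k + l) ≠ ρ c2 := by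
          intro l hl1 hlL c2 hc2
          exact Nat.find_min hex (m := l) hlL ⟨hl1, c2, hc2⟩
        have hwalk : WalkN (HasseM M) (Nat.find hex) (fun x => s (n0 + k + x)) := by
          intro x hx
          show HasseM M (s (n0 + k + x)) (s (n0 + k + (x + 1)))
          rw [show n0 + k + (x + 1) = (n0 + k + x) + 1 by omega]
          exact hs.2 _
        rcases Nat.lt_or_ge (Nat.find hex) 2 with hL2 | hL2
        · have hc1 : s (n0 + k + 1) = ρ c'' := by
            have := hc''
            rw [show n0 + k + Nat.find hex = n0 + k + 1 by omega] at this
            exact this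
          have harr : HasseM M (ρ (c0 + k)) (ρ c'') := by
            have h' := hwalk 0 (by omega)
            show HasseM M (ρ (c0 + k)) (ρ c'')
            have h'' : HasseM M (s (n0 + k + 0)) (s (n0 + k + (0 + 1))) := h'
            rw [show n0 + k + 0 = n0 + k by omega,
              show n0 + k + (0 + 1) = n0 + k + 1 by omega, IH, hc1] at h''
            exact h''
          have hnext := hF.h_arrow_rho harr
          rw [show n0 + (k + 1) = n0 + k + 1 by omega, hc1, hnext,
            show c0 + (k + 1) = c0 + k + 1 by omega]
        · exfalso
          refine hF.seg_false (a := c0 + k) hwalk hL2 ?_ hc'' hmin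
          show s (n0 + k + 0) = ρ (c0 + k)
          rw [show n0 + k + 0 = n0 + k by omega]
          exact IH
    exact ⟨c0, n0, fun i => (claim i).symm⟩

lemma rho_not_crit (k : ℕ) : ρ k ∉ Crit M := by
  intro hcrit
  rcases Nat.even_or_odd k with ⟨k', hk⟩ | ⟨k', hk⟩
  · refine (hcrit _ (hF.hup k')).2 ?_
    show ρ (2*k') = ρ k
    rw [show 2*k' = k by omega]
  · refine (hcrit _ (hF.hup k')).1 ?_
    show ρ (2*k'+1) = ρ k
    rw [show 2*k'+1 = k by omega]

lemma rho_zero_crit : ρ 0 ∈ Crit (flipM M ρ) := by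
  rintro e (he | ⟨k, rfl⟩)
  · exact hF.diff_off he 0
  · exact ⟨hF.rho_ne (by omega), hF.rho_ne (by omega)⟩

lemma crit_flip : Crit (flipM M ρ) = Crit M ∪ {ρ 0} := by
  ext x
  constructor
  · intro hx
    by_cases hx0 : x = ρ 0
    · exact Or.inr hx0
    · left
      intro e he
      by_cases heU : e ∈ Uset ρ
      · obtain ⟨k, rfl⟩ := heU
        constructor
        · exact (hx _ (Or.inr ⟨k, rfl⟩)).1
        · show ρ (2*k) ≠ x
          rcases Nat.eq_zero_or_pos k with rfl | hk
          · exact fun hc => hx0 (by rw [← hc])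
          · have := (hx _ (Or.inr ⟨k - 1, rfl⟩)).2
            rw [show 2*(k-1)+2 = 2*k by omega] at this
            exact this
      · exact hx e (Or.inl ⟨he, heU⟩)
  · rintro (hx | hx)
    · rintro e (he | ⟨k, rfl⟩)
      · exact hx e he.1
      · constructor
        · exact (hx _ (hF.hup k)).1
        · have := (hx _ (hF.hup (k+1))).2
          rw [show 2*(k+1) = 2*k+2 by omega] at this
          exact this
    · have hx' : x = ρ 0 := hx
      rw [hx']
      exact hF.rho_zero_crit

end FlipSetup

end Flip2
section BuildFlip

variable {P : Type*} [PartialOrder P] {M : Set (P × P)} {deg : P → ℕ}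

lemma exists_flipSetup (hmorse : IsMorse M) (hg : GradedDeg deg)
    (hfin : (RayClasses (HasseM M)).Finite) {r : ℕ → P} (hr : IsRay (HasseM M) r) :
    ∃ ρ : ℕ → P, FlipSetup M ρ ∧ RayEquiv r ρ ∧ deg (ρ 0) = rayDeg deg r := by
  obtain ⟨T, hup, hdown, hlow, hhigh, hlb⟩ := ray_tail_structure hmorse.1 hg hr
  have hτray : IsRay (HasseM M) (fun k => r (T + k)) := hr.shift T
  obtain ⟨N, hN⟩ := skip_bound hmorse.2 hτray hfin
  refine ⟨fun k => r (T + (2*N + k)), ⟨hmorse, ?_, ?_, ?_, ?_, ?_⟩, ?_, ?_⟩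
  · -- injective
    intro a b hab
    simp only at hab
    have := hr.1 hab
    omega
  · -- hup
    intro k
    have h := hup (N + k)
    show (r (T + (2*N + (2*k+1))), r (T + (2*N + 2*k))) ∈ M
    rw [show T + (2*N + (2*k+1)) = T + (2*(N+k)+1) by omega,
      show T + (2*N + 2*k) = T + 2*(N+k) by omega]
    exact h
  · -- hdown
    intro k
    have h := (hdown (N + k)).1
    show r (T + (2*N + (2*k+2))) ⋖ r (T + (2*N + (2*k+1)))
    rw [show T + (2*N + (2*k+2)) = T + (2*(N+k)+2) by omega,
      show T + (2*N + (2*k+1)) = T + (2*(N+k)+1) by omega]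
    exact h
  · -- hdnm
    intro k
    have h := (hdown (N + k)).2
    show (r (T + (2*N + (2*k+1))), r (T + (2*N + (2*k+2)))) ∉ M
    rw [show T + (2*N + (2*k+1)) = T + (2*(N+k)+1) by omega,
      show T + (2*N + (2*k+2)) = T + (2*(N+k)+2) by omega]
    exact h
  · -- no skips
    intro d
    have hint' : ∀ l, 0 < l → l < d.m → ∀ c, d.p l ≠ (fun k => r (T + k)) c := by
      intro l hl1 hl2 c hc
      rcases Nat.lt_or_ge c (2*N) with hcN | hcN
      · -- cycle through the prefix
        have w1 : HasWalk (HasseM M) ((fun k => r (T + (2*N + k))) d.i) (r (T + c)) := by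
          refine ⟨l, d.p, hl1, fun x hx => d.hpath.2 x (by omega), d.hp0, hc⟩
        have w2 : HasWalk (HasseM M) (r (T + c)) ((fun k => r (T + (2*N + k))) d.i) := by
          have := hasWalk_of_ray hr.2 (show T + c < T + (2*N + d.i) by omega)
          exact this
        exact not_hasWalk_self hmorse.2 _ (w1.trans w2)
      · refine d.hint l hl1 hl2 (c - 2*N) ?_
        rw [hc]
        show (fun k => r (T + k)) c = (fun k => r (T + (2*N + k))) (c - 2*N)
        show r (T + c) = r (T + (2*N + (c - 2*N)))
        congr 1
        omega
    have hlt : 2*N + d.i < N :=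
      hN ⟨2*N + d.i, 2*N + d.j, d.m, d.p, by have := d.hij; omega, d.hpath, d.hp0, d.hpm,
        hint', by rcases d.hside with h | h; exact Or.inl h; exact Or.inr (by omega)⟩
    omega
  · -- RayEquiv
    exact ⟨T + 2*N, 0, fun i => by
      show r (T + 2*N + i) = r (T + (2*N + (0 + i)))
      congr 1
      omega⟩
  · -- degree
    have h1 := hlow N
    have hrd : rayDeg deg r = deg (r T) := rayDeg_eq_of ⟨T, rfl⟩ hlb
    show deg (r (T + (2*N + 0))) = rayDeg deg r
    rw [show T + (2*N + 0) = T + 2*N by omega, h1, hrd]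

end BuildFlip
section Main

variable {P : Type*} [PartialOrder P]

def StmtGoal (deg : P → ℕ) (M' : Set (P × P)) : Prop :=
  ∃ M : Set (P × P), IsMorse M ∧ Rayless (HasseM M) ∧
    ∃ c : RayClasses (HasseM M') → P, Function.Injective c ∧
      (∀ K : RayClasses (HasseM M'), c K ∉ Crit M') ∧
      (∀ K : RayClasses (HasseM M'), ∀ s ∈ (K : Set (ℕ → P)),
        deg (c K) = rayDeg deg s) ∧
      Crit M = Crit M' ∪ Set.range c

theorem main_aux (deg : P → ℕ) (hg : GradedDeg deg) :
    ∀ n : ℕ, ∀ M' : Set (P × P), IsMorse M' → (RayClasses (HasseM M')).Finite →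
      (RayClasses (HasseM M')).ncard = n → StmtGoal deg M' := by
  intro n
  induction n using Nat.strong_induction_on with
  | _ n IH =>
    intro M' hM' hfin hcard
    classical
    by_cases hempty : RayClasses (HasseM M') = ∅
    · refine ⟨M', hM', ?_, ?_⟩
      · rintro ⟨r, hr⟩
        have := classOf_mem_rayClasses hr
        rw [hempty] at this
        exact this
      · haveI hie : IsEmpty ↥(RayClasses (HasseM M')) := Set.isEmpty_coe_sort.2 hempty
        refine ⟨fun K => (hie.false K).elim, fun K => (hie.false K).elim,
          fun K => (hie.false K).elim, fun K => (hie.false K).elim, ?_⟩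
        rw [Set.range_eq_empty, Set.union_empty]
    · have hne : (RayClasses (HasseM M')).Nonempty := Set.nonempty_iff_ne_empty.2 hempty
      obtain ⟨K1, hK1⟩ := hne
      obtain ⟨r, hr, hK1eq⟩ := rayClasses_elim hK1
      obtain ⟨ρ, hFS, hreq, hdeg0⟩ := exists_flipSetup hM' hg hfin hr
      have hoff_ne : ∀ t : ℕ → P, (∀ n2 c2, t n2 ≠ ρ c2) → ¬ RayEquiv t r := by
        intro t hoff hequiv
        obtain ⟨a, b, h⟩ := hequiv.trans hreq
        exact hoff (a + 0) (b + 0) (h 0)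
      -- tails of rays of the flipped digraph
      have hmap : ∀ C : Set (ℕ → P), ∃ t : ℕ → P, C ∈ RayClasses (HasseM (flipM M' ρ)) →
          IsRay (HasseM M') t ∧ IsRay (HasseM (flipM M' ρ)) t ∧ (∀ n2 c2, t n2 ≠ ρ c2) ∧
            ∀ u ∈ C, RayEquiv u t := by
        intro C
        by_cases hC : C ∈ RayClasses (HasseM (flipM M' ρ))
        · obtain ⟨u, hu, hCeq⟩ := rayClasses_elim hC
          obtain ⟨T, hT⟩ := hFS.flip_ray_tail hu
          refine ⟨fun i => u (T + i), fun _ => ⟨?_, hu.shift T, ?_, ?_⟩⟩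
          · refine ⟨(hu.shift T).1, fun i => ?_⟩
            exact (hFS.flip_arrow_iff (Or.inl (fun s2 => hT (T + i) (by omega) s2))).1
              ((hu.shift T).2 i)
          · exact fun n2 c2 => hT (T + n2) (by omega) c2
          · intro u' hu'
            rw [hCeq] at hu'
            exact hu'.2.symm.trans (rayEquiv_shift u T)
        · exact ⟨r, fun h => absurd h hC⟩
      set g : Set (ℕ → P) → (ℕ → P) := fun C => (hmap C).choose with hgdef
      have hgspec : ∀ C, C ∈ RayClasses (HasseM (flipM M' ρ)) →
          IsRay (HasseM M') (g C) ∧ IsRay (HasseM (flipM M' ρ)) (g C) ∧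
            (∀ n2 c2, g C n2 ≠ ρ c2) ∧ ∀ u ∈ C, RayEquiv u (g C) :=
        fun C => (hmap C).choose_spec
      have hFmem : ∀ C ∈ RayClasses (HasseM (flipM M' ρ)),
          classOf (HasseM M') (g C) ∈ RayClasses (HasseM M') \ {K1} := by
        intro C hC
        obtain ⟨h1, h2, h3, h4⟩ := hgspec C hC
        refine ⟨classOf_mem_rayClasses h1, ?_⟩
        intro hc
        simp only [Set.mem_singleton_iff] at hc
        have hrK : r ∈ classOf (HasseM M') (g C) := by
          rw [hc, hK1eq]; exact mem_classOf_self hr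
        exact hoff_ne (g C) h3 hrK.2
      have hCeqg : ∀ C ∈ RayClasses (HasseM (flipM M' ρ)),
          C = classOf (HasseM (flipM M' ρ)) (g C) := by
        intro C hC
        obtain ⟨h1, h2, h3, h4⟩ := hgspec C hC
        obtain ⟨u, hu, hCeq⟩ := rayClasses_elim hC
        have humem : u ∈ C := by rw [hCeq]; exact mem_classOf_self hu
        exact hCeq.trans (classOf_eq h2 (h4 u humem))
      have hFinj : Set.InjOn (fun C => classOf (HasseM M') (g C))
          (RayClasses (HasseM (flipM M' ρ))) := by
        intro C hC C' hC' hFF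
        obtain ⟨h1, h2, h3, h4⟩ := hgspec C hC
        obtain ⟨h1', h2', h3', h4'⟩ := hgspec C' hC'
        have hequiv : RayEquiv (g C) (g C') := by
          have : g C' ∈ classOf (HasseM M') (g C) := by
            rw [show classOf (HasseM M') (g C) = classOf (HasseM M') (g C') from hFF]
            exact mem_classOf_self h1'
          exact this.2
        rw [hCeqg C hC, hCeqg C' hC']
        exact classOf_eq h2' hequiv
      have hNfin : (RayClasses (HasseM (flipM M' ρ))).Finite := by
        refine Set.Finite.of_finite_image (Set.Finite.subset (hfin.diff (t := {K1})) ?_) hFinj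
        exact Set.image_subset_iff.2 (fun C hC => hFmem C hC)
      have hNlt : (RayClasses (HasseM (flipM M' ρ))).ncard < n := by
        have h1 : (RayClasses (HasseM (flipM M' ρ))).ncard ≤
            (RayClasses (HasseM M') \ {K1}).ncard :=
          Set.ncard_le_ncard_of_injOn _ (fun C hC => hFmem C hC) hFinj (hfin.diff (t := {K1}))
        have h2 : (RayClasses (HasseM M') \ {K1}).ncard < (RayClasses (HasseM M')).ncard :=
          Set.ncard_diff_singleton_lt_of_mem hK1 hfin
        omega
      obtain ⟨Mfin, hMfin, hRayless, c', hc'inj, hc'crit, hc'deg, hc'Crit⟩ :=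
        IH _ hNlt (flipM M' ρ) hFS.flip_morse hNfin rfl
      -- the map from old classes (other than K1) to rays spanning new classes
      have hPsi : ∀ K : ↥(RayClasses (HasseM M')), ∃ t : ℕ → P, K.1 ≠ K1 →
          IsRay (HasseM M') t ∧ IsRay (HasseM (flipM M' ρ)) t ∧ (∀ n2 c2, t n2 ≠ ρ c2) ∧
            ∀ s ∈ K.1, RayEquiv s t := by
        rintro ⟨K, hK⟩
        by_cases hKne : K = K1
        · exact ⟨r, fun h => absurd hKne h⟩
        · obtain ⟨sK, hsK, hKeq⟩ := rayClasses_elim hK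
          rcases hFS.h_ray_dichotomy hsK with ⟨T, hT⟩ | hequiv
          · refine ⟨fun i => sK (T + i), fun _ => ⟨hsK.shift T, ?_, ?_, ?_⟩⟩
            · refine ⟨(hsK.shift T).1, fun i => ?_⟩
              exact (hFS.flip_arrow_iff (Or.inl (fun s2 => hT (T + i) (by omega) s2))).2
                ((hsK.shift T).2 i)
            · exact fun n2 c2 => hT (T + n2) (by omega) c2
            · intro s hs
              have hs2 : s ∈ classOf (HasseM M') sK := by rw [← hKeq]; exact hs
              exact hs2.2.symm.trans (rayEquiv_shift sK T)
          · exfalso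
            apply hKne
            rw [hKeq, hK1eq]
            exact (classOf_eq hsK (hreq.trans hequiv)).symm
      set ψ : ↥(RayClasses (HasseM M')) → (ℕ → P) := fun K => (hPsi K).choose with hψdef
      have hψspec : ∀ (K : ↥(RayClasses (HasseM M'))), K.1 ≠ K1 →
          IsRay (HasseM M') (ψ K) ∧ IsRay (HasseM (flipM M' ρ)) (ψ K) ∧
            (∀ n2 c2, ψ K n2 ≠ ρ c2) ∧ ∀ s ∈ K.1, RayEquiv s (ψ K) :=
        fun K => (hPsi K).choose_spec
      have hKeqψ : ∀ (K : ↥(RayClasses (HasseM M'))) (h : K.1 ≠ K1),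
          K.1 = classOf (HasseM M') (ψ K) := by
        intro K h
        obtain ⟨sK, hsK, hKeq⟩ := rayClasses_elim K.2
        have hmem : sK ∈ K.1 := by rw [hKeq]; exact mem_classOf_self hsK
        rw [hKeq]
        exact classOf_eq ((hψspec K h).1) ((hψspec K h).2.2.2 sK hmem)
      set cfun : ↥(RayClasses (HasseM M')) → P := fun K => if h : K.1 = K1 then ρ 0 else
        c' ⟨classOf (HasseM (flipM M' ρ)) (ψ K),
          classOf_mem_rayClasses ((hψspec K h).2.1)⟩ with hcdef
      have hcpos : ∀ (K : ↥(RayClasses (HasseM M'))) (h : K.1 = K1), cfun K = ρ 0 :=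
        fun K h => dif_pos h
      have hcneg : ∀ (K : ↥(RayClasses (HasseM M'))) (h : ¬ K.1 = K1),
          cfun K = c' ⟨classOf (HasseM (flipM M' ρ)) (ψ K),
            classOf_mem_rayClasses ((hψspec K h).2.1)⟩ :=
        fun K h => dif_neg h
      refine ⟨Mfin, hMfin, hRayless, cfun, ?_, ?_, ?_, ?_⟩
      · -- injective
        intro K K' hKK
        by_cases h : K.1 = K1 <;> by_cases h' : K'.1 = K1
        · exact Subtype.ext (h.trans h'.symm)
        · exfalso
          rw [hcpos K h, hcneg K' h'] at hKK
          have := hFS.rho_zero_crit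
          rw [hKK] at this
          exact hc'crit _ this
        · exfalso
          rw [hcneg K h, hcpos K' h'] at hKK
          have := hFS.rho_zero_crit
          rw [← hKK] at this
          exact hc'crit _ this
        · rw [hcneg K h, hcneg K' h'] at hKK
          have hceq := hc'inj hKK
          have hclass : classOf (HasseM (flipM M' ρ)) (ψ K) =
              classOf (HasseM (flipM M' ρ)) (ψ K') := congrArg Subtype.val hceq
          have hequiv : RayEquiv (ψ K) (ψ K') := by
            have : ψ K' ∈ classOf (HasseM (flipM M' ρ)) (ψ K) := by
              rw [hclass]; exact mem_classOf_self ((hψspec K' h').2.1)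
            exact this.2
          refine Subtype.ext ?_
          rw [hKeqψ K h, hKeqψ K' h']
          exact classOf_eq ((hψspec K' h').1) hequiv
      · -- not critical in M'
        intro K
        by_cases h : K.1 = K1
        · rw [hcpos K h]
          exact hFS.rho_not_crit 0
        · rw [hcneg K h]
          intro hc
          exact hc'crit _ (by rw [hFS.crit_flip]; exact Or.inl hc)
      · -- degrees
        intro K s hs
        by_cases h : K.1 = K1
        · rw [hcpos K h]
          have hs' : s ∈ classOf (HasseM M') r := by
            rw [← hK1eq, ← h]; exact hs
          rw [hdeg0]
          exact rayDeg_inv hM'.1 hg hr hs'.1 hs'.2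
        · rw [hcneg K h]
          have hmem : ψ K ∈ classOf (HasseM (flipM M' ρ)) (ψ K) :=
            mem_classOf_self ((hψspec K h).2.1)
          rw [hc'deg _ _ hmem]
          have hs' : s ∈ K.1 := hs
          have hsray : IsRay (HasseM M') s := by
            rw [hKeqψ K h] at hs'
            exact hs'.1
          exact (rayDeg_inv hM'.1 hg hsray ((hψspec K h).1)
            ((hψspec K h).2.2.2 s hs)).symm
      · -- critical sets
        rw [hc'Crit, hFS.crit_flip]
        ext x
        constructor
        · rintro ((hx | hx) | hx)
          · exact Or.inl hx
          · right
            simp only [Set.mem_singleton_iff] at hx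
            refine ⟨⟨K1, hK1⟩, ?_⟩
            rw [hcpos ⟨K1, hK1⟩ rfl, hx]
          · right
            obtain ⟨C, hC⟩ := hx
            have hKmem := hFmem C.1 C.2
            refine ⟨⟨classOf (HasseM M') (g C.1), hKmem.1⟩, ?_⟩
            have hKne : classOf (HasseM M') (g C.1) ≠ K1 := by
              intro hc
              exact hKmem.2 (by simpa using hc)
            rw [hcneg ⟨classOf (HasseM M') (g C.1), hKmem.1⟩ hKne, ← hC]
            congr 1
            refine Subtype.ext ?_
            show classOf (HasseM (flipM M' ρ)) (ψ ⟨_, hKmem.1⟩) = C.1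
            obtain ⟨hg1, hg2, hg3, hg4⟩ := hgspec C.1 C.2
            have hgK : g C.1 ∈ (⟨classOf (HasseM M') (g C.1), hKmem.1⟩ :
                ↥(RayClasses (HasseM M'))).1 := mem_classOf_self hg1
            have hgψ : RayEquiv (g C.1) (ψ ⟨_, hKmem.1⟩) :=
              (hψspec ⟨_, hKmem.1⟩ hKne).2.2.2 (g C.1) hgK
            exact (classOf_eq hg2 hgψ.symm).trans (hCeqg C.1 C.2).symm
        · rintro (hx | ⟨K, rfl⟩)
          · exact Or.inl (Or.inl hx)
          · by_cases h : K.1 = K1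
            · rw [hcpos K h]
              exact Or.inl (Or.inr rfl)
            · rw [hcneg K h]
              exact Or.inr ⟨_, rfl⟩

end Main

/-- a Morse matching `M'` with finitely many equivalence classes of
rays may be replaced by a rayless Morse matching `M` whose critical elements are
those of `M'` plus one new element `c_[r]` for each equivalence class `[r]` of
rays, with `deg (c_[r])` the degree of the ray `r`. -/
theorem stmt4 {P : Type*} [PartialOrder P] (deg : P → ℕ) (hgraded : GradedDeg deg)
    (M' : Set (P × P)) (hM' : IsMorse M')
    (hfin : (RayClasses (HasseM M')).Finite) :
    ∃ M : Set (P × P), IsMorse M ∧ Rayless (HasseM M) ∧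
      ∃ c : RayClasses (HasseM M') → P, Function.Injective c ∧
        (∀ K : RayClasses (HasseM M'), c K ∉ Crit M') ∧
        (∀ K : RayClasses (HasseM M'), ∀ s ∈ (K : Set (ℕ → P)),
          deg (c K) = rayDeg deg s) ∧
        Crit M = Crit M' ∪ Set.range c := by
  exact main_aux deg hgraded ((RayClasses (HasseM M')).ncard) M' hM' hfin rfl
end
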